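/- arXiv:2003.00004 — 4 statements merged into one kernel-verified Lean document; each statement's English description precedes it below -/
import Mathlib

section
/- Let μ be a monotone, submodular, continuous-from-below-and-above set function on the Borel subsets of [0,1] and 1 < p < ∞. Then V maps L_{p,μ}([0,1]) into itself and ‖V(f) − V(g)‖_{L_{p,μ}} ≤ μ([0,1]) · ‖f − g‖_{L_{p,μ}} for all f, g ∈ L_{p,μ}([0,1]). -/
open MeasureTheory Set Filter Topology
open scoped ENNReal NNReal

/-- The Choquet integral of `f` over `A` with respect to the set function `μ`:
`∫_0^∞ μ({f ≥ β} ∩ A) dβ + ∫_{-∞}^0 (μ({f ≥ β} ∩ A) - μ A) dβ`. -/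
noncomputable def choquet {α : Type*} (μ : Set α → ℝ) (A : Set α) (f : α → ℝ) : ℝ :=
  (∫ β in Ioi (0:ℝ), μ ({ω | β ≤ f ω} ∩ A)) +
  ∫ β in Iio (0:ℝ), (μ ({ω | β ≤ f ω} ∩ A) - μ A)

/-- Membership in `L_{p,μ}([0,1])`: measurable with `(C)∫_0^1 |f|^p dμ < ∞`
(finiteness expressed as integrability of the layer function). -/
def MemLp (μ : Set ℝ → ℝ) (p : ℝ) (f : ℝ → ℝ) : Prop :=
  Measurable f ∧
    IntegrableOn (fun β => μ ({t | β ≤ |f t| ^ p} ∩ Icc 0 1)) (Ioi (0:ℝ))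

namespace VCaux

/-- Bundled capacity hypotheses. -/
structure Capacity (μ : Set ℝ → ℝ) : Prop where
  empty : μ ∅ = 0
  mono : ∀ ⦃A B : Set ℝ⦄, A ⊆ B → μ A ≤ μ B
  submod : ∀ A B : Set ℝ, μ (A ∪ B) + μ (A ∩ B) ≤ μ A + μ B

variable {μ : Set ℝ → ℝ}

lemma Capacity.nonneg (hμ : Capacity μ) (S : Set ℝ) : 0 ≤ μ S :=
  hμ.empty ▸ hμ.mono (empty_subset S)

lemma Capacity.subadd (hμ : Capacity μ) (X Y : Set ℝ) : μ (X ∪ Y) ≤ μ X + μ Y := by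
  have h1 := hμ.submod X Y
  have h2 := hμ.nonneg (X ∩ Y)
  linarith

/-- The layer function of `h` on `A`. -/
noncomputable def lay (μ : Set ℝ → ℝ) (A : Set ℝ) (h : ℝ → ℝ) : ℝ → ℝ :=
  fun β => μ ({ω | β ≤ h ω} ∩ A)

lemma lay_anti (hμ : Capacity μ) (A : Set ℝ) (h : ℝ → ℝ) : Antitone (lay μ A h) := by
  intro a b hab
  exact hμ.mono (inter_subset_inter_left _ (fun ω hω => le_trans hab hω))

lemma lay_nonneg (hμ : Capacity μ) (A : Set ℝ) (h : ℝ → ℝ) (β : ℝ) : 0 ≤ lay μ A h β :=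
  hμ.nonneg _

lemma lay_meas (hμ : Capacity μ) (A : Set ℝ) (h : ℝ → ℝ) : Measurable (lay μ A h) :=
  (lay_anti hμ A h).measurable

lemma lay_mono_fun (hμ : Capacity μ) {A : Set ℝ} {h1 h2 : ℝ → ℝ} (hle : ∀ s, h1 s ≤ h2 s)
    (β : ℝ) : lay μ A h1 β ≤ lay μ A h2 β :=
  hμ.mono (inter_subset_inter_left _ (fun ω hω => le_trans hω (hle ω)))

lemma lay_mono_set (hμ : Capacity μ) {A B : Set ℝ} (hAB : A ⊆ B) (h : ℝ → ℝ) (β : ℝ) :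
    lay μ A h β ≤ lay μ B h β :=
  hμ.mono (inter_subset_inter_right _ hAB)

lemma lay_le (hμ : Capacity μ) (A : Set ℝ) (h : ℝ → ℝ) (β : ℝ) : lay μ A h β ≤ μ A :=
  hμ.mono inter_subset_right

lemma lay_deficit (hμ : Capacity μ) (A : Set ℝ) (h : ℝ → ℝ) (β : ℝ) :
    μ A - lay μ A h β ≤ μ ({ω | h ω < β} ∩ A) := by
  have hsub : A ⊆ ({ω | β ≤ h ω} ∩ A) ∪ ({ω | h ω < β} ∩ A) := by
    intro ω hω
    rcases le_or_gt β (h ω) with hc | hc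
    · exact Or.inl ⟨hc, hω⟩
    · exact Or.inr ⟨hc, hω⟩
  have := hμ.mono hsub
  have := hμ.subadd ({ω | β ≤ h ω} ∩ A) ({ω | h ω < β} ∩ A)
  unfold lay; linarith

/-- Bundled context for the main theorem. -/
structure Ctx (μ : Set ℝ → ℝ) (p : ℝ) (f g : ℝ → ℝ) : Prop where
  cap : Capacity μ
  hp : 1 < p
  hfm : Measurable f
  hgm : Measurable g
  hfi : IntegrableOn (fun β => μ ({t | β ≤ |f t| ^ p} ∩ Icc 0 1)) (Ioi (0:ℝ))
  hgi : IntegrableOn (fun β => μ ({t | β ≤ |g t| ^ p} ∩ Icc 0 1)) (Ioi (0:ℝ))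
  cb : ∀ A : ℕ → Set ℝ, (∀ k, MeasurableSet (A k)) → Monotone A →
    Tendsto (fun k => μ (A k)) atTop (𝓝 (μ (⋃ k, A k)))

variable {p : ℝ} {f g : ℝ → ℝ}

/-- master dominating function -/
noncomputable def ee (f g : ℝ → ℝ) : ℝ → ℝ := fun s => 2 * |f s| + 2 * |g s| + 1

/-- master integrable majorant of all layer functions -/
noncomputable def Phi (μ : Set ℝ → ℝ) (f g : ℝ → ℝ) : ℝ → ℝ := lay μ (Icc 0 1) (ee f g)

lemma hfi' (h : Ctx μ p f g) : IntegrableOn (lay μ (Icc 0 1) (fun t => |f t| ^ p)) (Ioi (0:ℝ)) :=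
  h.hfi

lemma hgi' (h : Ctx μ p f g) : IntegrableOn (lay μ (Icc 0 1) (fun t => |g t| ^ p)) (Ioi (0:ℝ)) :=
  h.hgi

/-- abs-layer is dominated by the p-power layer beyond 1 -/
lemma abs_layer_le (h : Ctx μ p f g) {u : ℝ → ℝ} {γ : ℝ} (hγ : 1 ≤ γ) :
    μ ({s | γ ≤ |u s|} ∩ Icc 0 1) ≤ lay μ (Icc 0 1) (fun t => |u t| ^ p) γ := by
  apply h.cap.mono
  apply inter_subset_inter_left
  intro s hs
  simp only [mem_setOf_eq] at hs ⊢
  calc γ = γ ^ (1:ℝ) := (Real.rpow_one γ).symm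
    _ ≤ γ ^ p := Real.rpow_le_rpow_of_exponent_le hγ (le_of_lt h.hp)
    _ ≤ |u s| ^ p := Real.rpow_le_rpow (le_trans zero_le_one hγ) hs (by linarith [h.hp])

lemma Phi_nonneg (h : Ctx μ p f g) (β : ℝ) : 0 ≤ Phi μ f g β := lay_nonneg h.cap _ _ _

lemma Phi_meas (h : Ctx μ p f g) : Measurable (Phi μ f g) := lay_meas h.cap _ _

lemma Phi_int (h : Ctx μ p f g) : IntegrableOn (Phi μ f g) (Ioi (0:ℝ)) := by
  have hmeas := (Phi_meas h).aestronglyMeasurable (μ := volume.restrict (Ioi (0:ℝ)))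
  have h4 : (0:ℝ) ≤ 5 := by norm_num
  have hsplit : Ioc (0:ℝ) 5 ∪ Ioi 5 = Ioi 0 := Ioc_union_Ioi_eq_Ioi h4
  rw [← hsplit, integrableOn_union]
  constructor
  · -- bounded piece
    apply Integrable.mono' (g := fun _ => μ (Icc (0:ℝ) 1))
    · exact integrableOn_const measure_Ioc_lt_top.ne
    · exact (Phi_meas h).aestronglyMeasurable
    · refine Eventually.of_forall (fun β => ?_)
      rw [Real.norm_of_nonneg (Phi_nonneg h β)]
      exact lay_le h.cap _ _ β
  · -- tail piece
    set Gf := lay μ (Icc 0 1) (fun t => |f t| ^ p) with hGf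
    set Gg := lay μ (Icc 0 1) (fun t => |g t| ^ p) with hGg
    have hIf : Integrable ((Ioi (0:ℝ)).indicator Gf) :=
      (integrable_indicator_iff measurableSet_Ioi).2 (hfi' h)
    have hIg : Integrable ((Ioi (0:ℝ)).indicator Gg) :=
      (integrable_indicator_iff measurableSet_Ioi).2 (hgi' h)
    have hIf4 : Integrable (fun β => ((Ioi (0:ℝ)).indicator Gf) (β / 5)) :=
      hIf.comp_div (by norm_num)
    have hIg4 : Integrable (fun β => ((Ioi (0:ℝ)).indicator Gg) (β / 5)) :=
      hIg.comp_div (by norm_num)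
    apply Integrable.mono'
      (g := fun β => ((Ioi (0:ℝ)).indicator Gf) (β / 5) + ((Ioi (0:ℝ)).indicator Gg) (β / 5))
    · exact (hIf4.add hIg4).integrableOn
    · exact (Phi_meas h).aestronglyMeasurable
    · refine (ae_restrict_iff' measurableSet_Ioi).2 (Eventually.of_forall (fun β hβ => ?_))
      have hβ4 : (5:ℝ) < β := hβ
      have hq : (0:ℝ) < β / 5 := by linarith
      rw [indicator_of_mem (mem_Ioi.2 hq), indicator_of_mem (mem_Ioi.2 hq),
        Real.norm_of_nonneg (Phi_nonneg h β)]
      have hsplit2 : {s | β ≤ ee f g s} ∩ Icc 0 1 ⊆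
          ({s | β/5 ≤ |f s|} ∩ Icc 0 1) ∪ ({s | β/5 ≤ |g s|} ∩ Icc 0 1) := by
        intro s hs
        rcases hs with ⟨hs1, hs2⟩
        simp only [mem_setOf_eq] at hs1
        by_contra hcon
        simp only [mem_union, mem_inter_iff, mem_setOf_eq, not_or, not_and_or] at hcon
        have h1 : ¬ (β/5 ≤ |f s|) := by tauto
        have h2 : ¬ (β/5 ≤ |g s|) := by tauto
        push_neg at h1 h2
        unfold ee at hs1
        linarith
      calc Phi μ f g β ≤ μ (({s | β/5 ≤ |f s|} ∩ Icc 0 1) ∪ ({s | β/5 ≤ |g s|} ∩ Icc 0 1)) :=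
            h.cap.mono hsplit2
        _ ≤ μ ({s | β/5 ≤ |f s|} ∩ Icc 0 1) + μ ({s | β/5 ≤ |g s|} ∩ Icc 0 1) :=
            h.cap.subadd _ _
        _ ≤ Gf (β/5) + Gg (β/5) := by
            have h14 : (1:ℝ) ≤ β / 5 := by linarith
            exact add_le_add (abs_layer_le h h14) (abs_layer_le h h14)

/-- any function dominated by `ee` has integrable layers on `Ioi 0` -/
lemma int_Ioi (h : Ctx μ p f g) {A : Set ℝ} (hA : A ⊆ Icc 0 1) {u : ℝ → ℝ}
    (hb : ∀ s, |u s| ≤ ee f g s) : IntegrableOn (lay μ A u) (Ioi (0:ℝ)) := by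
  apply Integrable.mono' (Phi_int h) ((lay_meas h.cap A u).aestronglyMeasurable)
  refine Eventually.of_forall (fun β => ?_)
  rw [Real.norm_of_nonneg (lay_nonneg h.cap A u β)]
  apply h.cap.mono
  intro s hs
  exact ⟨le_trans hs.1 (le_trans (le_abs_self _) (hb s)), hA hs.2⟩

lemma lay_le_Phi (h : Ctx μ p f g) {A : Set ℝ} (hA : A ⊆ Icc 0 1) {u : ℝ → ℝ}
    (hb : ∀ s, |u s| ≤ ee f g s) (β : ℝ) : lay μ A u β ≤ Phi μ f g β := by
  apply h.cap.mono
  intro s hs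
  exact ⟨le_trans hs.1 (le_trans (le_abs_self _) (hb s)), hA hs.2⟩

lemma PhiNeg_int (h : Ctx μ p f g) : IntegrableOn (fun β => Phi μ f g (-β)) (Iio (0:ℝ)) := by
  have hI : Integrable ((Ioi (0:ℝ)).indicator (Phi μ f g)) :=
    (integrable_indicator_iff measurableSet_Ioi).2 (Phi_int h)
  have hIn : Integrable (fun β => ((Ioi (0:ℝ)).indicator (Phi μ f g)) (-β)) := hI.comp_neg
  apply (hIn.integrableOn (s := Iio 0)).congr_fun ?_ measurableSet_Iio
  intro β hβ
  have h2 : (0:ℝ) < -β := by simpa using hβ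
  show (Ioi (0:ℝ)).indicator (Phi μ f g) (-β) = Phi μ f g (-β)
  exact indicator_of_mem (mem_Ioi.2 h2) _

lemma deficit_le_PhiNeg (h : Ctx μ p f g) {A : Set ℝ} (hA : A ⊆ Icc 0 1) {u : ℝ → ℝ}
    (hb : ∀ s, |u s| ≤ ee f g s) {β : ℝ} (hβ : β < 0) :
    μ A - lay μ A u β ≤ Phi μ f g (-β) := by
  refine le_trans (lay_deficit h.cap A u β) (h.cap.mono ?_)
  intro s hs
  rcases hs with ⟨hs1, hs2⟩
  simp only [mem_setOf_eq] at hs1 ⊢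
  refine ⟨?_, hA hs2⟩
  have : -u s ≤ |u s| := neg_le_abs _
  have := hb s
  simp only [mem_setOf_eq]
  linarith

lemma int_Iio (h : Ctx μ p f g) {A : Set ℝ} (hA : A ⊆ Icc 0 1) {u : ℝ → ℝ}
    (hb : ∀ s, |u s| ≤ ee f g s) :
    IntegrableOn (fun β => lay μ A u β - μ A) (Iio (0:ℝ)) := by
  apply Integrable.mono' (PhiNeg_int h)
    (((lay_meas h.cap A u).sub measurable_const).aestronglyMeasurable)
  refine (ae_restrict_iff' measurableSet_Iio).2 (Eventually.of_forall (fun β hβ => ?_))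
  have h1 : lay μ A u β ≤ μ A := lay_le h.cap A u β
  rw [Real.norm_of_nonpos (by simp only [Pi.sub_apply]; linarith)]
  have := deficit_le_PhiNeg h hA hb (mem_Iio.1 hβ)
  simp only [Pi.sub_apply]
  linarith





variable {μ : Set ℝ → ℝ} {p : ℝ} {f g : ℝ → ℝ}

lemma choquet_eq (μ : Set ℝ → ℝ) (A : Set ℝ) (u : ℝ → ℝ) :
    choquet μ A u =
      (∫ β in Ioi (0:ℝ), lay μ A u β) + ∫ β in Iio (0:ℝ), (lay μ A u β - μ A) := rfl

/-- for nonnegative integrands the negative part vanishes -/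
lemma choquet_of_nonneg {A : Set ℝ} {u : ℝ → ℝ} (hu : ∀ s, 0 ≤ u s) :
    choquet μ A u = ∫ β in Ioi (0:ℝ), lay μ A u β := by
  rw [choquet_eq]
  have : ∫ β in Iio (0:ℝ), (lay μ A u β - μ A) = 0 := by
    rw [setIntegral_congr_fun measurableSet_Iio (g := fun _ => (0:ℝ))]
    · exact integral_zero _ _
    · intro β hβ
      have : {ω | β ≤ u ω} = univ := by
        ext ω; simp only [mem_setOf_eq, mem_univ, iff_true]
        exact le_trans (le_of_lt (mem_Iio.1 hβ)) (hu ω)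
      simp [lay, this]
  rw [this, add_zero]

lemma choquet_mono (h : Ctx μ p f g) {A : Set ℝ} (hA : A ⊆ Icc 0 1) {u v : ℝ → ℝ}
    (hub : ∀ s, |u s| ≤ ee f g s) (hvb : ∀ s, |v s| ≤ ee f g s) (huv : ∀ s, u s ≤ v s) :
    choquet μ A u ≤ choquet μ A v := by
  rw [choquet_eq, choquet_eq]
  apply add_le_add
  · exact setIntegral_mono_on (int_Ioi h hA hub) (int_Ioi h hA hvb) measurableSet_Ioi
      (fun β _ => lay_mono_fun h.cap huv β)
  · exact setIntegral_mono_on (int_Iio h hA hub) (int_Iio h hA hvb) measurableSet_Iio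
      (fun β _ => by have := lay_mono_fun (A := A) h.cap huv β; linarith)

/-- translation-difference integral bound for bounded antitone functions -/
lemma shift_integral_bound {gb : ℝ → ℝ} (hanti : Antitone gb) (h0 : ∀ β, 0 ≤ gb β)
    {Mb : ℝ} (hM : ∀ β, gb β ≤ Mb) {c : ℝ} (hc : 0 ≤ c) :
    Integrable (fun β => gb (β - c) - gb β) ∧
      (∫ β, (gb (β - c) - gb β)) ≤ c * Mb := by
  have hanti' : Antitone (fun β => gb (β - c)) := fun a b hab => hanti (by linarith)
  have hii : ∀ a b : ℝ, IntervalIntegrable gb volume a b := fun a b => hanti.intervalIntegrable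
  have hii' : ∀ a b : ℝ, IntervalIntegrable (fun β => gb (β - c)) volume a b :=
    fun a b => hanti'.intervalIntegrable
  have hiiD : ∀ a b : ℝ, IntervalIntegrable (fun β => gb (β - c) - gb β) volume a b :=
    fun a b => (hii' a b).sub (hii a b)
  have hDnn : ∀ β, 0 ≤ gb (β - c) - gb β := fun β => sub_nonneg.2 (hanti (by linarith))
  have key : ∀ a b : ℝ, (∫ x in a..b, (gb (x - c) - gb x)) ≤ c * Mb := by
    intro a b
    rw [intervalIntegral.integral_sub (hii' a b) (hii a b)]
    rw [intervalIntegral.integral_comp_sub_right gb c]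
    have e1 : (∫ x in (a-c)..(a), gb x) + (∫ x in a..(b-c), gb x) = ∫ x in (a-c)..(b-c), gb x :=
      intervalIntegral.integral_add_adjacent_intervals (hii _ _) (hii _ _)
    have e2 : (∫ x in a..(b-c), gb x) + (∫ x in (b-c)..b, gb x) = ∫ x in a..b, gb x :=
      intervalIntegral.integral_add_adjacent_intervals (hii _ _) (hii _ _)
    have b1 : (∫ x in (a-c)..(a), gb x) ≤ c * Mb := by
      calc (∫ x in (a-c)..(a), gb x) ≤ ∫ x in (a-c)..(a), Mb := by
            apply intervalIntegral.integral_mono_on (by linarith) (hii _ _)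
              intervalIntegrable_const
            exact fun x _ => hM x
        _ = c * Mb := by rw [intervalIntegral.integral_const, smul_eq_mul]; ring
    have b2 : 0 ≤ ∫ x in (b-c)..b, gb x :=
      intervalIntegral.integral_nonneg (by linarith) (fun x _ => h0 x)
    linarith
  have hInt : Integrable (fun β => gb (β - c) - gb β) := by
    apply integrable_of_intervalIntegral_norm_bounded (l := (atTop : Filter ℕ))
      (a := fun n : ℕ => -(n:ℝ)) (b := fun n : ℕ => (n:ℝ)) (c * Mb)
    · exact fun n => (hiiD _ _).1
    · exact tendsto_neg_atBot_iff.2 tendsto_natCast_atTop_atTop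
    · exact tendsto_natCast_atTop_atTop
    · refine Eventually.of_forall (fun n => ?_)
      have : (∫ x in (-(n:ℝ))..(n:ℝ), ‖gb (x - c) - gb x‖) =
          ∫ x in (-(n:ℝ))..(n:ℝ), (gb (x - c) - gb x) := by
        apply intervalIntegral.integral_congr
        intro x _
        exact Real.norm_of_nonneg (hDnn x)
      rw [this]; exact key _ _
  refine ⟨hInt, ?_⟩
  have htend := intervalIntegral_tendsto_integral hInt
    (tendsto_neg_atBot_iff.2 (tendsto_natCast_atTop_atTop (R := ℝ)))
    (tendsto_natCast_atTop_atTop (R := ℝ))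
  exact le_of_tendsto htend (Eventually.of_forall (fun n => key _ _))

/-- single-step subadditivity -/
lemma choquet_step (h : Ctx μ p f g) {A : Set ℝ} (hA : A ⊆ Icc 0 1) {w : ℝ → ℝ} {B : Set ℝ}
    {c : ℝ} (hc : 0 ≤ c)
    (hwb : ∀ s, |w s| ≤ ee f g s)
    (hwb2 : ∀ s, |w s + B.indicator (fun _ => c) s| ≤ ee f g s) :
    choquet μ A (fun s => w s + B.indicator (fun _ => c) s) ≤
      choquet μ A w + c * μ (B ∩ A) := by
  set gB : ℝ → ℝ := fun γ => μ (B ∩ {ω | γ ≤ w ω} ∩ A) with hgB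
  have hgBanti : Antitone gB := by
    intro a b hab
    exact h.cap.mono (inter_subset_inter_left _ (inter_subset_inter_right _
      (fun ω hω => le_trans hab hω)))
  have hgBnn : ∀ γ, 0 ≤ gB γ := fun γ => h.cap.nonneg _
  have hgBle : ∀ γ, gB γ ≤ μ (B ∩ A) := fun γ =>
    h.cap.mono (fun ω hω => ⟨hω.1.1, hω.2⟩)
  obtain ⟨hDint, hDval⟩ := shift_integral_bound hgBanti hgBnn hgBle hc
  set D : ℝ → ℝ := fun β => gB (β - c) - gB β with hD
  have hkey : ∀ β, lay μ A (fun s => w s + B.indicator (fun _ => c) s) β ≤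
      lay μ A w β + D β := by
    intro β
    have hsetid : {ω | β ≤ w ω + B.indicator (fun _ => c) ω} =
        {ω | β ≤ w ω} ∪ (B ∩ {ω | β - c ≤ w ω}) := by
      ext ω
      by_cases hB : ω ∈ B
      · simp only [mem_setOf_eq, mem_union, mem_inter_iff, hB, true_and,
          indicator_of_mem hB]
        constructor
        · intro h1; right; linarith
        · rintro (h1 | h1) <;> linarith
      · simp only [mem_setOf_eq, mem_union, mem_inter_iff, hB, false_and, or_false,
          indicator_of_notMem hB, add_zero]
    have hXY : ({ω | β ≤ w ω} ∩ A) ∪ (B ∩ {ω | β - c ≤ w ω} ∩ A) =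
        {ω | β ≤ w ω + B.indicator (fun _ => c) ω} ∩ A := by
      rw [hsetid, union_inter_distrib_right]
    have hXcapY : ({ω | β ≤ w ω} ∩ A) ∩ (B ∩ {ω | β - c ≤ w ω} ∩ A) =
        B ∩ {ω | β ≤ w ω} ∩ A := by
      ext ω
      simp only [mem_inter_iff, mem_setOf_eq]
      constructor
      · rintro ⟨⟨h1, h2⟩, ⟨h3, _⟩, _⟩; exact ⟨⟨h3, h1⟩, h2⟩
      · rintro ⟨⟨h3, h1⟩, h2⟩; exact ⟨⟨h1, h2⟩, ⟨h3, by linarith⟩, h2⟩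
    have := h.cap.submod ({ω | β ≤ w ω} ∩ A) (B ∩ {ω | β - c ≤ w ω} ∩ A)
    rw [hXY, hXcapY] at this
    have hgb1 : μ (B ∩ {ω | β ≤ w ω} ∩ A) = gB β := rfl
    have hgb2 : μ (B ∩ {ω | β - c ≤ w ω} ∩ A) = gB (β - c) := rfl
    simp only [lay, hD]
    rw [hgb1, hgb2] at this
    linarith
  rw [choquet_eq, choquet_eq]
  have int1l := int_Ioi h hA hwb2
  have int1r := (int_Ioi h hA hwb).add hDint.integrableOn
  have int2l := int_Iio h hA hwb2
  have int2r := (int_Iio h hA hwb).add hDint.integrableOn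
  have step1 : (∫ β in Ioi (0:ℝ), lay μ A (fun s => w s + B.indicator (fun _ => c) s) β) ≤
      (∫ β in Ioi (0:ℝ), lay μ A w β) + ∫ β in Ioi (0:ℝ), D β := by
    rw [← integral_add (int_Ioi h hA hwb) hDint.integrableOn]
    exact setIntegral_mono_on int1l int1r measurableSet_Ioi (fun β _ => hkey β)
  have step2 : (∫ β in Iio (0:ℝ), (lay μ A (fun s => w s + B.indicator (fun _ => c) s) β - μ A)) ≤
      (∫ β in Iio (0:ℝ), (lay μ A w β - μ A)) + ∫ β in Iio (0:ℝ), D β := by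
    rw [← integral_add (int_Iio h hA hwb) hDint.integrableOn]
    apply setIntegral_mono_on int2l int2r measurableSet_Iio
    intro β _
    have := hkey β
    simp only [Pi.add_apply]
    linarith
  have hDsplit : (∫ β in Ioi (0:ℝ), D β) + ∫ β in Iio (0:ℝ), D β ≤ c * μ (B ∩ A) := by
    have hdisj : Disjoint (Ioi (0:ℝ)) (Iio (0:ℝ)) := by
      rw [disjoint_iff_inter_eq_empty]
      ext x; simp only [mem_inter_iff, mem_Ioi, mem_Iio, mem_empty_iff_false, iff_false]
      rintro ⟨h1, h2⟩; linarith
    rw [← setIntegral_union hdisj measurableSet_Iio hDint.integrableOn hDint.integrableOn]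
    calc (∫ β in Ioi (0:ℝ) ∪ Iio (0:ℝ), D β) ≤ ∫ β, D β := by
          apply setIntegral_le_integral hDint
          exact Eventually.of_forall (fun β => sub_nonneg.2 (hgBanti (by linarith)))
      _ ≤ c * μ (B ∩ A) := hDval
  linarith


/-- iterated steps -/
lemma choquet_steps (h : Ctx μ p f g) {A : Set ℝ} (hA : A ⊆ Icc 0 1) {w : ℝ → ℝ}
    {c : ℝ} (hc : 0 ≤ c) (B : ℕ → Set ℝ) (K : ℕ)
    (hb : ∀ k, k ≤ K → ∀ s,
      |w s + ∑ i ∈ Finset.range k, (B i).indicator (fun _ => c) s| ≤ ee f g s) :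
    choquet μ A (fun s => w s + ∑ i ∈ Finset.range K, (B i).indicator (fun _ => c) s) ≤
      choquet μ A w + ∑ i ∈ Finset.range K, c * μ (B i ∩ A) := by
  induction K with
  | zero =>
      simp only [Finset.range_zero, Finset.sum_empty, add_zero]
      exact le_refl _
  | succ K ih =>
      have hbK : ∀ k, k ≤ K → ∀ s,
          |w s + ∑ i ∈ Finset.range k, (B i).indicator (fun _ => c) s| ≤ ee f g s :=
        fun k hk => hb k (le_trans hk (Nat.le_succ K))
      have hfe : (fun s => w s + ∑ i ∈ Finset.range (K+1), (B i).indicator (fun _ => c) s) =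
          (fun s => (w s + ∑ i ∈ Finset.range K, (B i).indicator (fun _ => c) s) +
            (B K).indicator (fun _ => c) s) := by
        funext s; rw [Finset.sum_range_succ]; ring
      rw [hfe]
      have hstep := choquet_step h hA hc (w := fun s => w s +
          ∑ i ∈ Finset.range K, (B i).indicator (fun _ => c) s) (B := B K)
        (hbK K le_rfl)
        (by intro s
            have := hb (K+1) le_rfl s
            rw [Finset.sum_range_succ] at this
            simpa [add_assoc] using this)
      refine le_trans hstep ?_
      rw [Finset.sum_range_succ]
      have := ih hbK
      linarith

lemma filter_range_lt (K M : ℕ) : (Finset.range K).filter (fun i => i < M) =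
    Finset.range (min K M) := by
  ext i
  simp only [Finset.mem_filter, Finset.mem_range, lt_min_iff]

/-- value of the staircase sum -/
lemma sum_indicator_eq {d : ℝ → ℝ} (hd0 : ∀ s, 0 ≤ d s) {c : ℝ} (hc : 0 < c) (K : ℕ) (s : ℝ) :
    (∑ i ∈ Finset.range K, ({x | ((i:ℝ)+1)*c ≤ d x}).indicator (fun _ => c) s)
      = c * min K (Nat.floor (d s / c)) := by
  set M := Nat.floor (d s / c) with hM
  have hcond : ∀ i : ℕ, (((i:ℝ)+1)*c ≤ d s) ↔ i < M := by
    intro i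
    rw [← le_div_iff₀ hc]
    rw [show ((i:ℝ)+1) = ((i+1 : ℕ):ℝ) by push_cast; ring]
    rw [← Nat.le_floor_iff (div_nonneg (hd0 s) hc.le), ← hM]
    omega
  have : ∀ i ∈ Finset.range K, ({x | ((i:ℝ)+1)*c ≤ d x}).indicator (fun _ => c) s
      = if i < M then c else 0 := by
    intro i _
    by_cases hi : i < M
    · rw [if_pos hi]
      exact indicator_of_mem (by simpa [mem_setOf_eq] using (hcond i).2 hi) _
    · rw [if_neg hi]
      exact indicator_of_notMem (by simpa [mem_setOf_eq] using fun hh => hi ((hcond i).1 hh)) _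
  rw [Finset.sum_congr rfl this, ← Finset.sum_filter, filter_range_lt K M,
    Finset.sum_const, Finset.card_range, nsmul_eq_mul]
  ring

lemma sum_indicator_le_d {d : ℝ → ℝ} (hd0 : ∀ s, 0 ≤ d s) {c : ℝ} (hc : 0 < c) (K : ℕ) (s : ℝ) :
    (∑ i ∈ Finset.range K, ({x | ((i:ℝ)+1)*c ≤ d x}).indicator (fun _ => c) s) ≤ d s := by
  rw [sum_indicator_eq hd0 hc K s]
  have h1 : (min K (Nat.floor (d s / c)) : ℝ) ≤ (Nat.floor (d s / c) : ℝ) := by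
    exact_mod_cast Nat.cast_le.2 (min_le_right _ _)
  have h2 : ((Nat.floor (d s / c)) : ℝ) ≤ d s / c := Nat.floor_le (div_nonneg (hd0 s) hc.le)
  have h3 : ((min K (Nat.floor (d s / c)) : ℕ) : ℝ) ≤ d s / c := by
    rw [Nat.cast_min]; exact le_trans (min_le_right _ _) h2
  calc c * ((min K (Nat.floor (d s / c)) : ℕ) : ℝ) ≤ c * (d s / c) :=
        mul_le_mul_of_nonneg_left h3 hc.le
    _ = d s := by field_simp

lemma sum_indicator_nonneg {d : ℝ → ℝ} {c : ℝ} (hc : 0 ≤ c) (K : ℕ) (s : ℝ) :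
    0 ≤ ∑ i ∈ Finset.range K, ({x | ((i:ℝ)+1)*c ≤ d x}).indicator (fun _ => c) s :=
  Finset.sum_nonneg (fun i _ => indicator_nonneg (fun _ _ => hc) s)

lemma approx_ge {d : ℝ → ℝ} (hd0 : ∀ s, 0 ≤ d s) (n : ℕ) (s : ℝ) :
    min (d s) n ≤
      (∑ i ∈ Finset.range (n * 2^n),
        ({x | ((i:ℝ)+1)*((2:ℝ)⁻¹^n) ≤ d x}).indicator (fun _ => (2:ℝ)⁻¹^n) s) + (2:ℝ)⁻¹^n := by
  set c : ℝ := (2:ℝ)⁻¹^n with hcdef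
  have hc : 0 < c := by positivity
  set K := n * 2^n with hK
  set M := Nat.floor (d s / c) with hM
  rw [sum_indicator_eq hd0 hc K s]
  have hKc : (K:ℝ) * c = n := by
    rw [hK, hcdef]
    push_cast
    rw [inv_pow]
    field_simp
  rcases le_or_gt (K:ℕ) M with hKM | hKM
  · rw [min_eq_left hKM]
    have : (n:ℝ) ≤ c * K + c := by rw [mul_comm]; nlinarith [hc.le, hKc]
    exact le_trans (min_le_right _ _) this
  · rw [min_eq_right (le_of_lt hKM)]
    have hfl : d s / c < M + 1 := Nat.lt_floor_add_one _
    have : d s < c * M + c := by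
      have := (div_lt_iff₀ hc).1 hfl
      linarith [this]
    exact le_trans (min_le_left _ _) (by linarith)

/-- Riemann lower-sum bound -/
lemma riemann_sum_le (h : Ctx μ p f g) {A : Set ℝ} (hA : A ⊆ Icc 0 1) {d : ℝ → ℝ}
    (hdb : ∀ s, |d s| ≤ ee f g s) {c : ℝ} (hc : 0 < c) (K : ℕ) :
    ∑ i ∈ Finset.range K, c * μ ({x | ((i:ℝ)+1)*c ≤ d x} ∩ A) ≤
      ∫ β in Ioi (0:ℝ), lay μ A d β := by
  set m := lay μ A d with hm
  have hmint : IntegrableOn m (Ioi (0:ℝ)) := int_Ioi h hA hdb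
  have hmanti : Antitone m := lay_anti h.cap A d
  set a : ℕ → ℝ := fun i => i * c with ha
  have hii : ∀ i, IntervalIntegrable m volume (a i) (a (i+1)) :=
    fun i => hmanti.intervalIntegrable
  have hstep : ∀ i ∈ Finset.range K,
      c * μ ({x | ((i:ℝ)+1)*c ≤ d x} ∩ A) ≤ ∫ x in (a i)..(a (i+1)), m x := by
    intro i _
    have hle : a i ≤ a (i+1) := by
      simp only [ha]; push_cast; nlinarith [hc.le]
    have h1 : μ ({x | ((i:ℝ)+1)*c ≤ d x} ∩ A) = m (a (i+1)) := by
      simp only [hm, lay, ha]; push_cast; ring_nf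
    rw [h1]
    calc c * m (a (i+1)) = ∫ x in (a i)..(a (i+1)), m (a (i+1)) := by
          rw [intervalIntegral.integral_const, smul_eq_mul]
          have : a (i+1) - a i = c := by simp only [ha]; push_cast; ring
          rw [this]
      _ ≤ ∫ x in (a i)..(a (i+1)), m x := by
          apply intervalIntegral.integral_mono_on hle intervalIntegrable_const (hii i)
          intro x hx
          exact hmanti hx.2
  calc ∑ i ∈ Finset.range K, c * μ ({x | ((i:ℝ)+1)*c ≤ d x} ∩ A)
      ≤ ∑ i ∈ Finset.range K, ∫ x in (a i)..(a (i+1)), m x := Finset.sum_le_sum hstep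
    _ = ∫ x in (a 0)..(a K), m x :=
        intervalIntegral.sum_integral_adjacent_intervals (fun i _ => hii i)
    _ = ∫ x in Ioc (0:ℝ) (a K), m x := by
        rw [intervalIntegral.integral_of_le]
        · simp only [ha, Nat.cast_zero, zero_mul]
        · simp only [ha, Nat.cast_zero, zero_mul]; positivity
    _ ≤ ∫ β in Ioi (0:ℝ), m β := by
        apply setIntegral_mono_set hmint
        · exact Eventually.of_forall (fun β => lay_nonneg h.cap A d β)
        · exact HasSubset.Subset.eventuallyLE Ioc_subset_Ioi_self



/-- key subadditivity estimate: `C_A(u) ≤ C_A(v) + ∫ layers of d` -/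
lemma choquet_diff_le (h : Ctx μ p f g) {A : Set ℝ} (hA : A ⊆ Icc 0 1)
    (hAm : MeasurableSet A) {u v d : ℝ → ℝ}
    (hvm : Measurable v) (hdm : Measurable d) (hd0 : ∀ s, 0 ≤ d s)
    (hub : ∀ s, |u s| ≤ ee f g s)
    (hvdb : ∀ s, |v s| + d s + 1 ≤ ee f g s)
    (huv : ∀ s, u s ≤ v s + d s) :
    choquet μ A u ≤ choquet μ A v + ∫ β in Ioi (0:ℝ), lay μ A d β := by
  have hvb : ∀ s, |v s| ≤ ee f g s := by
    intro s; have := hvdb s; have := hd0 s; linarith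
  have hvdb' : ∀ s, |v s + d s| ≤ ee f g s := by
    intro s
    have h1 : |v s + d s| ≤ |v s| + d s := by
      have := abs_add_le (v s) (d s)
      rw [abs_of_nonneg (hd0 s)] at this; exact this
    have := hvdb s; linarith
  have hdb : ∀ s, |d s| ≤ ee f g s := by
    intro s
    rw [abs_of_nonneg (hd0 s)]
    have := hvdb s
    have := abs_nonneg (v s)
    linarith
  set S := ∫ β in Ioi (0:ℝ), lay μ A d β with hS
  -- step 1 : choquet u ≤ choquet (v+d)
  have step1 : choquet μ A u ≤ choquet μ A (fun s => v s + d s) :=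
    choquet_mono h hA hub hvdb' huv
  -- the truncated sequence
  set w : ℕ → ℝ → ℝ := fun n s => v s + min (d s) n with hw
  have hwb : ∀ n, ∀ s, |w n s| ≤ ee f g s := by
    intro n s
    have hmin0 : 0 ≤ min (d s) n := le_min (hd0 s) (Nat.cast_nonneg n)
    have : |w n s| ≤ |v s| + min (d s) n := by
      have := abs_add_le (v s) (min (d s) n)
      rw [abs_of_nonneg hmin0] at this; exact this
    have h2 : min (d s) n ≤ d s := min_le_left _ _
    have := hvdb s
    linarith
  -- per-n bound
  have hn_bound : ∀ n : ℕ, choquet μ A (w n) ≤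
      choquet μ A v + S + (2:ℝ)⁻¹^n * μ (Icc 0 1) := by
    intro n
    set c : ℝ := (2:ℝ)⁻¹^n with hcdef
    have hc : 0 < c := by positivity
    have hc1 : c ≤ 1 := by
      rw [hcdef, inv_pow]
      apply inv_le_one_of_one_le₀
      exact one_le_pow₀ (by norm_num)
    set K := n * 2^n with hK
    set B : ℕ → Set ℝ := fun i => {x | ((i:ℝ)+1)*c ≤ d x} with hB
    -- partial sums bounds
    have hpartial : ∀ k, ∀ s,
        0 ≤ (∑ i ∈ Finset.range k, (B i).indicator (fun _ => c) s) ∧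
        (∑ i ∈ Finset.range k, (B i).indicator (fun _ => c) s) ≤ d s :=
      fun k s => ⟨sum_indicator_nonneg hc.le k s, sum_indicator_le_d hd0 hc k s⟩
    have hb : ∀ k, k ≤ K → ∀ s,
        |v s + ∑ i ∈ Finset.range k, (B i).indicator (fun _ => c) s| ≤ ee f g s := by
      intro k _ s
      obtain ⟨h0', h1'⟩ := hpartial k s
      have habs : |v s + ∑ i ∈ Finset.range k, (B i).indicator (fun _ => c) s| ≤
          |v s| + ∑ i ∈ Finset.range k, (B i).indicator (fun _ => c) s := by
        have := abs_add_le (v s) (∑ i ∈ Finset.range k, (B i).indicator (fun _ => c) s)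
        rw [abs_of_nonneg h0'] at this; exact this
      have := hvdb s; linarith
    -- step onto staircase + constant
    have hmono2 : choquet μ A (w n) ≤ choquet μ A (fun s =>
        (v s + ∑ i ∈ Finset.range K, (B i).indicator (fun _ => c) s) +
          (univ : Set ℝ).indicator (fun _ => c) s) := by
      apply choquet_mono h hA (hwb n)
      · intro s
        obtain ⟨h0', h1'⟩ := hpartial K s
        rw [indicator_univ]
        have habs : |v s + ∑ i ∈ Finset.range K, (B i).indicator (fun _ => c) s + c| ≤
            |v s| + (∑ i ∈ Finset.range K, (B i).indicator (fun _ => c) s) + c := by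
          have h2 := abs_add_le (v s + ∑ i ∈ Finset.range K, (B i).indicator (fun _ => c) s) c
          have h3 := abs_add_le (v s) (∑ i ∈ Finset.range K, (B i).indicator (fun _ => c) s)
          rw [abs_of_nonneg hc.le] at h2
          rw [abs_of_nonneg h0'] at h3
          linarith
        have := hvdb s; linarith
      · intro s
        rw [indicator_univ]
        have := approx_ge hd0 n s
        simp only [hw]
        rw [← hcdef, ← hK] at this
        linarith
    have hsteps := choquet_steps h hA hc.le B K hb
    have hstepc := choquet_step h hA hc.le
      (w := fun s => v s + ∑ i ∈ Finset.range K, (B i).indicator (fun _ => c) s)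
      (B := univ) (hb K le_rfl)
      (by intro s
          obtain ⟨h0', h1'⟩ := hpartial K s
          rw [indicator_univ]
          have h2 := abs_add_le (v s + ∑ i ∈ Finset.range K, (B i).indicator (fun _ => c) s) c
          have h3 := abs_add_le (v s) (∑ i ∈ Finset.range K, (B i).indicator (fun _ => c) s)
          rw [abs_of_nonneg hc.le] at h2
          rw [abs_of_nonneg h0'] at h3
          have := hvdb s
          linarith)
    have hriemann := riemann_sum_le h hA hdb hc K
    have hμuniv : μ (univ ∩ A) ≤ μ (Icc 0 1) := by
      rw [univ_inter]
      exact h.cap.mono hA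
    calc choquet μ A (w n) ≤ _ := hmono2
      _ ≤ choquet μ A (fun s => v s + ∑ i ∈ Finset.range K, (B i).indicator (fun _ => c) s)
            + c * μ (univ ∩ A) := hstepc
      _ ≤ (choquet μ A v + ∑ i ∈ Finset.range K, c * μ (B i ∩ A)) + c * μ (univ ∩ A) := by
            linarith [hsteps]
      _ ≤ choquet μ A v + S + c * μ (Icc 0 1) := by
            have : ∑ i ∈ Finset.range K, c * μ (B i ∩ A) ≤ S := hriemann
            have h4 : c * μ (univ ∩ A) ≤ c * μ (Icc 0 1) :=
              mul_le_mul_of_nonneg_left hμuniv hc.le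
            linarith
  -- limit of the left side
  have hlim : Tendsto (fun n => choquet μ A (w n)) atTop
      (𝓝 (choquet μ A (fun s => v s + d s))) := by
    have hsets : ∀ β : ℝ, Tendsto (fun n : ℕ => μ ({ω | β ≤ w n ω} ∩ A)) atTop
        (𝓝 (μ ({ω | β ≤ v ω + d ω} ∩ A))) := by
      intro β
      have hmeas : ∀ k : ℕ, MeasurableSet ({ω | β ≤ w k ω} ∩ A) := by
        intro k
        apply MeasurableSet.inter _ hAm
        apply measurableSet_le measurable_const
        exact hvm.add (hdm.min measurable_const)
      have hmono : Monotone (fun k : ℕ => {ω | β ≤ w k ω} ∩ A) := by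
        intro k l hkl
        apply inter_subset_inter_left
        intro ω hω
        simp only [mem_setOf_eq, hw] at hω ⊢
        have : min (d ω) k ≤ min (d ω) l :=
          min_le_min le_rfl (Nat.cast_le.2 hkl)
        linarith
      have hunion : (⋃ k, ({ω | β ≤ w k ω} ∩ A)) = {ω | β ≤ v ω + d ω} ∩ A := by
        ext ω
        simp only [mem_iUnion, mem_inter_iff, mem_setOf_eq, hw]
        constructor
        · rintro ⟨k, hk, hAk⟩
          exact ⟨le_trans hk (by linarith [min_le_left (d ω) (k:ℝ)]), hAk⟩
        · rintro ⟨hk, hAk⟩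
          obtain ⟨k, hk'⟩ := exists_nat_ge (d ω)
          refine ⟨k, ?_, hAk⟩
          rw [min_eq_left hk']
          exact hk
      have := h.cb (fun k => {ω | β ≤ w k ω} ∩ A) hmeas hmono
      rwa [hunion] at this
    simp only [choquet_eq]
    apply Tendsto.add
    · apply tendsto_integral_of_dominated_convergence (Phi μ f g)
      · exact fun n => (lay_meas h.cap A (w n)).aestronglyMeasurable
      · exact Phi_int h
      · intro n
        refine Eventually.of_forall (fun β => ?_)
        rw [Real.norm_of_nonneg (lay_nonneg h.cap A (w n) β)]
        exact lay_le_Phi h hA (hwb n) β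
      · exact Eventually.of_forall (fun β => hsets β)
    · apply tendsto_integral_of_dominated_convergence (fun β => Phi μ f g (-β))
      · exact fun n =>
          ((lay_meas h.cap A (w n)).sub measurable_const).aestronglyMeasurable
      · exact PhiNeg_int h
      · intro n
        refine (ae_restrict_iff' measurableSet_Iio).2 (Eventually.of_forall (fun β hβ => ?_))
        have h1 : lay μ A (w n) β ≤ μ A := lay_le h.cap A (w n) β
        rw [Real.norm_of_nonpos (by linarith)]
        have := deficit_le_PhiNeg h hA (hwb n) (mem_Iio.1 hβ)
        linarith
      · exact Eventually.of_forall (fun β => (hsets β).sub_const (μ A))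
  -- limit of the right side
  have hlim2 : Tendsto (fun n : ℕ => choquet μ A v + S + (2:ℝ)⁻¹^n * μ (Icc 0 1)) atTop
      (𝓝 (choquet μ A v + S + 0)) := by
    apply Tendsto.add tendsto_const_nhds
    have : Tendsto (fun n : ℕ => ((2:ℝ)⁻¹)^n) atTop (𝓝 0) := by
      apply tendsto_pow_atTop_nhds_zero_of_abs_lt_one
      rw [abs_of_nonneg]; norm_num; norm_num
    simpa using this.mul_const (μ (Icc 0 1))
  have := le_of_tendsto_of_tendsto' hlim hlim2 hn_bound
  rw [add_zero] at this
  linarith [step1, this]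



/-- integrability of the layer function of `|f-g|^p` -/
lemma theta_int (h : Ctx μ p f g) :
    IntegrableOn (lay μ (Icc 0 1) (fun s => |f s - g s| ^ p)) (Ioi (0:ℝ)) := by
  set Gf := lay μ (Icc 0 1) (fun t => |f t| ^ p) with hGf
  set Gg := lay μ (Icc 0 1) (fun t => |g t| ^ p) with hGg
  have hIf : Integrable ((Ioi (0:ℝ)).indicator Gf) :=
    (integrable_indicator_iff measurableSet_Ioi).2 (hfi' h)
  have hIg : Integrable ((Ioi (0:ℝ)).indicator Gg) :=
    (integrable_indicator_iff measurableSet_Ioi).2 (hgi' h)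
  have h2p : (0:ℝ) < (2:ℝ)^p := Real.rpow_pos_of_pos (by norm_num) p
  have hIf2 : Integrable (fun β => ((Ioi (0:ℝ)).indicator Gf) (β / (2:ℝ)^p)) :=
    hIf.comp_div h2p.ne'
  have hIg2 : Integrable (fun β => ((Ioi (0:ℝ)).indicator Gg) (β / (2:ℝ)^p)) :=
    hIg.comp_div h2p.ne'
  apply Integrable.mono' (g := fun β =>
      ((Ioi (0:ℝ)).indicator Gf) (β / (2:ℝ)^p) + ((Ioi (0:ℝ)).indicator Gg) (β / (2:ℝ)^p))
    ((hIf2.add hIg2).integrableOn)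
    ((lay_meas h.cap _ _).aestronglyMeasurable)
  refine (ae_restrict_iff' measurableSet_Ioi).2 (Eventually.of_forall (fun β hβ => ?_))
  have hβ0 : (0:ℝ) < β := hβ
  have hq : (0:ℝ) < β / (2:ℝ)^p := div_pos hβ0 h2p
  rw [indicator_of_mem (mem_Ioi.2 hq), indicator_of_mem (mem_Ioi.2 hq),
    Real.norm_of_nonneg (lay_nonneg h.cap _ _ _)]
  have hsplit : {s | β ≤ |f s - g s| ^ p} ∩ Icc 0 1 ⊆
      ({s | β / (2:ℝ)^p ≤ |f s| ^ p} ∩ Icc 0 1) ∪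
        ({s | β / (2:ℝ)^p ≤ |g s| ^ p} ∩ Icc 0 1) := by
    intro s hs
    rcases hs with ⟨hs1, hs2⟩
    simp only [mem_setOf_eq] at hs1
    have hmax : |f s - g s| ≤ 2 * max |f s| |g s| := by
      calc |f s - g s| ≤ |f s| + |g s| := abs_sub _ _
        _ ≤ 2 * max |f s| |g s| := by
            have h1 := le_max_left |f s| |g s|
            have h2 := le_max_right |f s| |g s|
            linarith
    have hpow : |f s - g s| ^ p ≤ (2:ℝ)^p * (max |f s| |g s|) ^ p := by
      have h1 : |f s - g s| ^ p ≤ (2 * max |f s| |g s|) ^ p :=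
        Real.rpow_le_rpow (abs_nonneg _) hmax (by linarith [h.hp])
      rwa [Real.mul_rpow (by norm_num) (le_max_iff.2 (Or.inl (abs_nonneg _)))] at h1
    have hmaxp : (max |f s| |g s|) ^ p = max (|f s| ^ p) (|g s| ^ p) := by
      rcases le_total |f s| |g s| with hc | hc
      · rw [max_eq_right hc, max_eq_right (Real.rpow_le_rpow (abs_nonneg _) hc
          (by linarith [h.hp]))]
      · rw [max_eq_left hc, max_eq_left (Real.rpow_le_rpow (abs_nonneg _) hc
          (by linarith [h.hp]))]
    have : β / (2:ℝ)^p ≤ max (|f s| ^ p) (|g s| ^ p) := by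
      rw [← hmaxp, div_le_iff₀ h2p, mul_comm]
      linarith
    rcases max_cases (|f s| ^ p) (|g s| ^ p) with ⟨he, _⟩ | ⟨he, _⟩
    · left; exact ⟨by rw [mem_setOf_eq]; rw [he] at this; exact this, hs2⟩
    · right; exact ⟨by rw [mem_setOf_eq]; rw [he] at this; exact this, hs2⟩
  calc lay μ (Icc 0 1) (fun s => |f s - g s| ^ p) β
      ≤ μ (({s | β / (2:ℝ)^p ≤ |f s| ^ p} ∩ Icc 0 1) ∪
          ({s | β / (2:ℝ)^p ≤ |g s| ^ p} ∩ Icc 0 1)) := h.cap.mono hsplit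
    _ ≤ Gf (β / (2:ℝ)^p) + Gg (β / (2:ℝ)^p) := h.cap.subadd _ _

/-- Hölder-type bound for the layer integral of `|f-g|` -/
lemma holder_S_le (h : Ctx μ p f g) {A : Set ℝ} (hA : A ⊆ Icc 0 1) :
    (∫ β in Ioi (0:ℝ), lay μ A (fun s => |f s - g s|) β) ≤
      (μ (Icc 0 1)) ^ (1 - 1/p) *
        (∫ β in Ioi (0:ℝ), lay μ (Icc 0 1) (fun s => |f s - g s| ^ p) β) ^ (1/p) := by
  set d : ℝ → ℝ := fun s => |f s - g s| with hd
  set dp : ℝ → ℝ := fun s => |f s - g s| ^ p with hdp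
  set θ := lay μ (Icc 0 1) dp with hθ
  set N := ∫ β in Ioi (0:ℝ), θ β with hN
  set mI := μ (Icc (0:ℝ) 1) with hmI
  have hp1 : (1:ℝ) < p := h.hp
  have hp0 : (0:ℝ) < p := by linarith
  have hdb : ∀ s, |d s| ≤ ee f g s := by
    intro s
    rw [abs_abs]
    calc |f s - g s| ≤ |f s| + |g s| := abs_sub _ _
      _ ≤ ee f g s := by
          unfold ee
          have := abs_nonneg (f s); have := abs_nonneg (g s); linarith
  have hθint : IntegrableOn θ (Ioi (0:ℝ)) := theta_int h
  have hθnn : ∀ β, 0 ≤ θ β := fun β => lay_nonneg h.cap _ _ _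
  have hN0 : 0 ≤ N := setIntegral_nonneg measurableSet_Ioi (fun β _ => hθnn β)
  have hmI0 : 0 ≤ mI := h.cap.nonneg _
  have hSint : IntegrableOn (lay μ A d) (Ioi (0:ℝ)) := int_Ioi h hA hdb
  have hS0 : ∀ β, 0 ≤ lay μ A d β := fun β => lay_nonneg h.cap _ _ _
  -- degenerate cases
  rcases eq_or_lt_of_le hmI0 with hmIz | hmIpos
  · have hz : ∀ β ∈ Ioi (0:ℝ), lay μ A d β = (0:ℝ) := by
      intro β _
      have h1 : lay μ A d β ≤ μ (Icc 0 1) := le_trans (lay_le h.cap A d β) (h.cap.mono hA)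
      have := hS0 β
      rw [← hmI] at h1
      linarith [hmIz]
    rw [setIntegral_congr_fun measurableSet_Ioi hz, integral_zero]
    positivity
  rcases eq_or_lt_of_le hN0 with hNz | hNpos
  · -- N = 0 : all layers vanish
    have hθz : ∀ γ : ℝ, 0 < γ → θ γ = 0 := by
      intro γ hγ
      by_contra hne
      have hθγpos : 0 < θ γ := lt_of_le_of_ne (hθnn γ) (Ne.symm hne)
      have hbound : γ * θ γ ≤ N := by
        calc γ * θ γ = ∫ _ in Ioc (0:ℝ) γ, θ γ := by
              rw [setIntegral_const, Real.volume_real_Ioc, smul_eq_mul,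
                max_eq_left (by linarith)]
              ring
          _ ≤ ∫ β in Ioc (0:ℝ) γ, θ β := by
              apply setIntegral_mono_on (integrableOn_const measure_Ioc_lt_top.ne)
                (hθint.mono_set Ioc_subset_Ioi_self) measurableSet_Ioc
              intro β hβ
              exact lay_anti h.cap _ _ hβ.2
          _ ≤ N := by
              apply setIntegral_mono_set hθint
                (Eventually.of_forall (fun β => hθnn β))
                (HasSubset.Subset.eventuallyLE Ioc_subset_Ioi_self)
      nlinarith
    have hz : ∀ β ∈ Ioi (0:ℝ), lay μ A d β = (0:ℝ) := by
      intro β hβ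
      have hβ0 : (0:ℝ) < β := hβ
      have hsub : {ω | β ≤ d ω} ∩ A ⊆ {ω | β ^ p ≤ dp ω} ∩ Icc 0 1 := by
        intro s hs
        refine ⟨?_, hA hs.2⟩
        have : β ≤ d s := hs.1
        exact Real.rpow_le_rpow hβ0.le this hp0.le
      have h1 : lay μ A d β ≤ θ (β ^ p) := h.cap.mono hsub
      have h2 : θ (β ^ p) = 0 := hθz _ (Real.rpow_pos_of_pos hβ0 p)
      have := hS0 β
      linarith
    rw [setIntegral_congr_fun measurableSet_Ioi hz, integral_zero]
    positivity
  -- main case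
  set q : ℝ := p / (p - 1) with hq
  have hq0 : 0 < q := div_pos hp0 (by linarith)
  have hq1 : 1/q = 1 - 1/p := by rw [hq]; field_simp
  have hq2 : 1/p + 1/q = 1 := by rw [hq1]; ring
  set K := N ^ (1/p) with hK
  set A0 := mI ^ (1 - 1/p) with hA0
  have hKpos : 0 < K := Real.rpow_pos_of_pos hNpos _
  have hA0pos : 0 < A0 := Real.rpow_pos_of_pos hmIpos _
  set b := mI ^ (-(1/q)) with hb
  have hbpos : 0 < b := Real.rpow_pos_of_pos hmIpos _
  have idKp : K ^ p = N := by
    rw [hK, ← Real.rpow_mul hN0, one_div_mul_cancel hp0.ne', Real.rpow_one]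
  have idbq : b ^ q = mI⁻¹ := by
    rw [hb, ← Real.rpow_mul hmI0]
    rw [show -(1/q) * q = -1 by field_simp]
    rw [Real.rpow_neg hmI0, Real.rpow_one]
  have idbA0 : b * A0 = 1 := by
    rw [hb, hA0, ← hq1, ← Real.rpow_add hmIpos]
    simp
  set c1 := A0 * K / (N * p) with hc1def
  set c2 := A0 * K / (mI * q) with hc2def
  have hc1 : 0 < c1 := by positivity
  have hc2 : 0 < c2 := by positivity
  have hyoung : ∀ x : ℝ, 0 ≤ x → x ≤ c1 * x ^ p + c2 := by
    intro x hx
    have hpq : p.HolderConjugate q := (Real.holderConjugate_iff_eq_conjExponent hp1).2 hq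
    have hy := Real.young_inequality_of_nonneg (div_nonneg hx hKpos.le) hbpos.le hpq
    have hdiv : (x / K) ^ p = x ^ p / N := by
      rw [Real.div_rpow hx hKpos.le, idKp]
    rw [hdiv, idbq] at hy
    -- multiply by A0 * K
    have hy2 := mul_le_mul_of_nonneg_left hy (by positivity : (0:ℝ) ≤ A0 * K)
    have hL : A0 * K * (x / K * b) = x := by
      have hKne : K ≠ 0 := hKpos.ne'
      field_simp
      calc A0 * x * b = x * (b * A0) := by ring
        _ = x := by rw [idbA0, mul_one]
    have hR : A0 * K * (x ^ p / N / p + mI⁻¹ / q) = c1 * x ^ p + c2 := by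
      rw [hc1def, hc2def]
      field_simp
    rw [hL, hR] at hy2
    exact hy2
  -- split the integral at c2
  have hsplitset : Ioc (0:ℝ) c2 ∪ Ioi c2 = Ioi 0 := Ioc_union_Ioi_eq_Ioi hc2.le
  have hdisj : Disjoint (Ioc (0:ℝ) c2) (Ioi c2) := by
    rw [disjoint_iff_inter_eq_empty]
    ext x
    simp only [mem_inter_iff, mem_Ioc, mem_Ioi, mem_empty_iff_false, iff_false]
    rintro ⟨⟨_, h1⟩, h2⟩; linarith
  have hSsplit : (∫ β in Ioi (0:ℝ), lay μ A d β) =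
      (∫ β in Ioc (0:ℝ) c2, lay μ A d β) + ∫ β in Ioi c2, lay μ A d β := by
    rw [← setIntegral_union hdisj measurableSet_Ioi
      (hSint.mono_set (by rw [← hsplitset]; exact subset_union_left))
      (hSint.mono_set (by rw [← hsplitset]; exact subset_union_right)), hsplitset]
  have hbound1 : (∫ β in Ioc (0:ℝ) c2, lay μ A d β) ≤ c2 * mI := by
    calc (∫ β in Ioc (0:ℝ) c2, lay μ A d β) ≤ ∫ _ in Ioc (0:ℝ) c2, mI := by
          apply setIntegral_mono_on
            (hSint.mono_set Ioc_subset_Ioi_self)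
            (integrableOn_const measure_Ioc_lt_top.ne) measurableSet_Ioc
          intro β _
          exact le_trans (lay_le h.cap A d β) (h.cap.mono hA)
      _ = c2 * mI := by
          rw [setIntegral_const, Real.volume_real_Ioc, smul_eq_mul,
            max_eq_left (by linarith)]
          ring
  -- the tail bound
  have hθind : Integrable ((Ioi (0:ℝ)).indicator θ) :=
    (integrable_indicator_iff measurableSet_Ioi).2 hθint
  have hH : Integrable (fun u => ((Ioi (0:ℝ)).indicator θ) (u / c1)) :=
    hθind.comp_div hc1.ne'
  have hF : Integrable (fun β => ((Ioi (0:ℝ)).indicator θ) ((β - c2) / c1)) :=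
    hH.comp_sub_right c2
  have hpt : ∀ β ∈ Ioi c2, lay μ A d β ≤ ((Ioi (0:ℝ)).indicator θ) ((β - c2) / c1) := by
    intro β hβ
    have hβc2 : c2 < β := hβ
    have hpos : (0:ℝ) < (β - c2) / c1 := div_pos (by linarith) hc1
    rw [indicator_of_mem (mem_Ioi.2 hpos)]
    apply h.cap.mono
    intro s hs
    refine ⟨?_, hA hs.2⟩
    have hds : β ≤ d s := hs.1
    have hd0 : 0 ≤ d s := abs_nonneg _
    have hy := hyoung (d s) hd0
    rw [mem_setOf_eq, div_le_iff₀ hc1]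
    have hdp_eq : d s ^ p = dp s := rfl
    nlinarith [hy]
  have hbound2 : (∫ β in Ioi c2, lay μ A d β) ≤ c1 * N := by
    have hmono := setIntegral_mono_on (hSint.mono_set (Ioi_subset_Ioi hc2.le))
      hF.integrableOn measurableSet_Ioi hpt
    refine le_trans hmono ?_
    have heq1 : (∫ β in Ioi c2, ((Ioi (0:ℝ)).indicator θ) ((β - c2) / c1)) =
        ∫ β, ((Ioi (0:ℝ)).indicator θ) ((β - c2) / c1) := by
      rw [← integral_indicator measurableSet_Ioi]
      congr 1
      apply indicator_eq_self.2
      intro β hβ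
      rw [mem_Ioi]
      by_contra hle
      push_neg at hle
      have hnonpos : (β - c2) / c1 ≤ 0 := div_nonpos_of_nonpos_of_nonneg (by linarith) hc1.le
      have : ((Ioi (0:ℝ)).indicator θ) ((β - c2) / c1) = 0 :=
        indicator_of_notMem (by simpa using hnonpos) _
      exact hβ this
    have heq2 : (∫ β, ((Ioi (0:ℝ)).indicator θ) ((β - c2) / c1)) =
        ∫ β, ((Ioi (0:ℝ)).indicator θ) (β / c1) :=
      integral_sub_right_eq_self (fun u => ((Ioi (0:ℝ)).indicator θ) (u / c1)) c2
    have heq3 : (∫ β, ((Ioi (0:ℝ)).indicator θ) (β / c1)) =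
        ∫ β in Ioi (0:ℝ), θ (β / c1) := by
      rw [← integral_indicator measurableSet_Ioi]
      congr 1
      funext β
      by_cases hβ : β ∈ Ioi (0:ℝ)
      · rw [indicator_of_mem hβ]
        have hmem : β / c1 ∈ Ioi (0:ℝ) := by
          rw [mem_Ioi] at hβ ⊢
          positivity
        rw [indicator_of_mem hmem]
      · rw [indicator_of_notMem hβ]
        have hmem : β / c1 ∉ Ioi (0:ℝ) := by
          rw [mem_Ioi] at hβ ⊢
          push_neg at hβ ⊢
          exact div_nonpos_of_nonpos_of_nonneg hβ hc1.le
        rw [indicator_of_notMem hmem]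
    have heq4 : (∫ β in Ioi (0:ℝ), θ (β / c1)) = c1 * N := by
      have hcv := integral_comp_mul_left_Ioi θ 0 (inv_pos.2 hc1)
      simp only [mul_zero] at hcv
      have heq : (fun β => θ (β / c1)) = fun β => θ (c1⁻¹ * β) := by
        funext β; rw [div_eq_inv_mul]
      calc (∫ β in Ioi (0:ℝ), θ (β / c1)) = ∫ β in Ioi (0:ℝ), θ (c1⁻¹ * β) := by rw [heq]
        _ = (c1⁻¹)⁻¹ • ∫ β in Ioi (0:ℝ), θ β := hcv
        _ = c1 * N := by rw [inv_inv, smul_eq_mul, hN]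
    rw [heq1, heq2, heq3, heq4]
  -- combine
  have e1 : c2 * mI = A0 * K * (1/q) := by
    rw [hc2def]
    field_simp
  have e2 : c1 * N = A0 * K * (1/p) := by
    rw [hc1def]
    field_simp
  have halg : c2 * mI + c1 * N = A0 * K := by
    rw [e1, e2, ← mul_add]
    rw [show 1/q + 1/p = 1/p + 1/q by ring, hq2, mul_one]
  rw [hSsplit]
  calc (∫ β in Ioc (0:ℝ) c2, lay μ A d β) + ∫ β in Ioi c2, lay μ A d β
      ≤ c2 * mI + c1 * N := add_le_add hbound1 hbound2
    _ = A0 * K := halg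



lemma lay_int_bounded (hμ : Capacity μ) (A : Set ℝ) (u : ℝ → ℝ) {s : Set ℝ}
    (hfin : volume s < ⊤) : IntegrableOn (lay μ A u) s := by
  apply Integrable.mono' (g := fun _ => μ A)
    (integrableOn_const hfin.ne)
    ((lay_meas hμ A u).aestronglyMeasurable)
  refine Eventually.of_forall (fun β => ?_)
  rw [Real.norm_of_nonneg (lay_nonneg hμ A u β)]
  exact lay_le hμ A u β

/-- measurability of the Volterra-Choquet operator -/
lemma V_meas (h : Ctx μ p f g) : Measurable (fun x => choquet μ (Icc 0 x) f) := by
  set L : ℝ → ℝ → ℝ := fun x β => lay μ (Icc 0 x) f β with hL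
  -- positive part
  set T1n : ℕ → ℝ → ℝ := fun n x => ∫ β in Ioc (0:ℝ) (n:ℝ), L x β with hT1n
  have hT1n_int : ∀ (n : ℕ) (x : ℝ), IntegrableOn (L x) (Ioc (0:ℝ) (n:ℝ)) :=
    fun n x => lay_int_bounded h.cap _ _ measure_Ioc_lt_top
  have hT1n_mono : ∀ n, Monotone (T1n n) := by
    intro n x y hxy
    apply setIntegral_mono_on (hT1n_int n x) (hT1n_int n y) measurableSet_Ioc
    intro β _
    exact lay_mono_set h.cap (Icc_subset_Icc le_rfl hxy) f β
  have hT1n_meas : ∀ n, Measurable (T1n n) := fun n => (hT1n_mono n).measurable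
  have key1 : ∀ x, (∫⁻ β in Ioi (0:ℝ), ENNReal.ofReal (L x β)) =
      ⨆ n : ℕ, ENNReal.ofReal (T1n n x) := by
    intro x
    set fn : ℕ → ℝ → ℝ≥0∞ :=
      fun n => (Ioc (0:ℝ) (n:ℝ)).indicator (fun β => ENNReal.ofReal (L x β)) with hfn
    have hfnmeas : ∀ n, Measurable (fn n) :=
      fun n => (ENNReal.measurable_ofReal.comp (lay_meas h.cap _ f)).indicator
        measurableSet_Ioc
    have hfnmono : Monotone fn := by
      intro n m hnm
      exact indicator_le_indicator_of_subset
        (Ioc_subset_Ioc_right (Nat.cast_le.2 hnm)) (fun β => zero_le)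
    have hsup : (fun β => ⨆ n, fn n β) =
        (Ioi (0:ℝ)).indicator (fun β => ENNReal.ofReal (L x β)) := by
      funext β
      by_cases hβ : β ∈ Ioi (0:ℝ)
      · rw [indicator_of_mem hβ]
        obtain ⟨n, hn⟩ := exists_nat_ge β
        apply le_antisymm
        · apply iSup_le
          intro m
          by_cases hm : β ∈ Ioc (0:ℝ) (m:ℝ)
          · simp only [hfn, indicator_of_mem hm]; exact le_rfl
          · simp only [hfn, indicator_of_notMem hm]; exact zero_le
        · refine le_trans (le_of_eq ?_) (le_iSup _ n)
          simp only [hfn]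
          have hmem : β ∈ Ioc (0:ℝ) (n:ℝ) := mem_Ioc.2 ⟨mem_Ioi.1 hβ, hn⟩
          exact (indicator_of_mem hmem (fun β => ENNReal.ofReal (L x β))).symm
      · rw [indicator_of_notMem hβ]
        have : ∀ n, fn n β = 0 := by
          intro n
          apply indicator_of_notMem
          intro hmem
          exact hβ (mem_Ioi.2 hmem.1)
        simp [this]
    calc (∫⁻ β in Ioi (0:ℝ), ENNReal.ofReal (L x β))
        = ∫⁻ β, (Ioi (0:ℝ)).indicator (fun β => ENNReal.ofReal (L x β)) β :=
          (lintegral_indicator measurableSet_Ioi _).symm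
      _ = ∫⁻ β, ⨆ n, fn n β := by rw [hsup]
      _ = ⨆ n, ∫⁻ β, fn n β := by rw [lintegral_iSup (μ := volume) hfnmeas hfnmono]
      _ = ⨆ n, ENNReal.ofReal (T1n n x) := by
          congr 1
          funext n
          simp only [hfn]
          rw [lintegral_indicator measurableSet_Ioc]
          exact (ofReal_integral_eq_lintegral_ofReal (hT1n_int n x)
            (Eventually.of_forall (fun β => lay_nonneg h.cap _ f β))).symm
  set F1 : ℝ → ℝ := fun x => (⨆ n : ℕ, ENNReal.ofReal (T1n n x)).toReal with hF1
  have hF1meas : Measurable F1 :=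
    (Measurable.iSup (fun n => ENNReal.measurable_ofReal.comp (hT1n_meas n))).ennreal_toReal
  have hT1eq : ∀ x, (∫ β in Ioi (0:ℝ), L x β) = F1 x := by
    intro x
    by_cases hi : IntegrableOn (L x) (Ioi (0:ℝ))
    · rw [integral_eq_lintegral_of_nonneg_ae
        (Eventually.of_forall (fun β => lay_nonneg h.cap _ f β))
        ((lay_meas h.cap _ f).aestronglyMeasurable), key1 x]
    · rw [integral_undef hi]
      have htop : (∫⁻ β in Ioi (0:ℝ), ENNReal.ofReal (L x β)) = ⊤ := by
        by_contra hne
        apply hi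
        refine ⟨(lay_meas h.cap _ f).aestronglyMeasurable, ?_⟩
        rw [hasFiniteIntegral_iff_ofReal
          (Eventually.of_forall (fun β => lay_nonneg h.cap _ f β))]
        exact lt_top_iff_ne_top.2 hne
      have hsup_top : (⨆ n : ℕ, ENNReal.ofReal (T1n n x)) = ⊤ := by
        rw [← key1 x]; exact htop
      simp [hF1, hsup_top]
  -- negative part
  set u2 : ℝ → ℝ → ℝ := fun x β => μ (Icc 0 x) - L x β with hu2
  have hu2nn : ∀ x β, 0 ≤ u2 x β := by
    intro x β
    have := lay_le h.cap (Icc 0 x) f β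
    simp only [hu2]
    linarith
  have hu2meas : ∀ x, Measurable (u2 x) :=
    fun x => measurable_const.sub (lay_meas h.cap _ f)
  have hu2int : ∀ (n : ℕ) (x : ℝ), IntegrableOn (u2 x) (Ico (-(n:ℝ)) 0) := by
    intro n x
    apply Integrable.mono' (g := fun _ => μ (Icc 0 x))
      (integrableOn_const measure_Ico_lt_top.ne)
      ((hu2meas x).aestronglyMeasurable)
    refine Eventually.of_forall (fun β => ?_)
    rw [Real.norm_of_nonneg (hu2nn x β)]
    have := lay_nonneg h.cap (Icc 0 x) f β
    simp only [hu2]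
    linarith
  set T2n : ℕ → ℝ → ℝ := fun n x => ∫ β in Ico (-(n:ℝ)) 0, u2 x β with hT2n
  have hT2n_meas : ∀ n, Measurable (T2n n) := by
    intro n
    have heq : T2n n = fun x => (n:ℝ) * μ (Icc 0 x) - ∫ β in Ico (-(n:ℝ)) 0, L x β := by
      funext x
      rw [hT2n]
      simp only [hu2]
      rw [integral_sub (integrableOn_const (C := μ (Icc 0 x)) measure_Ico_lt_top.ne)
        (lay_int_bounded h.cap _ _ measure_Ico_lt_top)]
      rw [setIntegral_const, Real.volume_real_Ico, smul_eq_mul]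
      norm_num
      rfl
    rw [heq]
    have hWmono : Monotone (fun x => μ (Icc (0:ℝ) x)) :=
      fun x y hxy => h.cap.mono (Icc_subset_Icc le_rfl hxy)
    have hUmono : Monotone (fun x => ∫ β in Ico (-(n:ℝ)) 0, L x β) := by
      intro x y hxy
      apply setIntegral_mono_on (lay_int_bounded h.cap _ _ measure_Ico_lt_top)
        (lay_int_bounded h.cap _ _ measure_Ico_lt_top) measurableSet_Ico
      intro β _
      exact lay_mono_set h.cap (Icc_subset_Icc le_rfl hxy) f β
    exact (measurable_const.mul hWmono.measurable).sub hUmono.measurable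
  have key2 : ∀ x, (∫⁻ β in Iio (0:ℝ), ENNReal.ofReal (u2 x β)) =
      ⨆ n : ℕ, ENNReal.ofReal (T2n n x) := by
    intro x
    set fn : ℕ → ℝ → ℝ≥0∞ :=
      fun n => (Ico (-(n:ℝ)) 0).indicator (fun β => ENNReal.ofReal (u2 x β)) with hfn
    have hfnmeas : ∀ n, Measurable (fn n) :=
      fun n => (ENNReal.measurable_ofReal.comp (hu2meas x)).indicator measurableSet_Ico
    have hfnmono : Monotone fn := by
      intro n m hnm
      apply indicator_le_indicator_of_subset
      · apply Ico_subset_Ico_left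
        simp only [neg_le_neg_iff]
        exact_mod_cast hnm
      · exact fun β => zero_le
    have hsup : (fun β => ⨆ n, fn n β) =
        (Iio (0:ℝ)).indicator (fun β => ENNReal.ofReal (u2 x β)) := by
      funext β
      by_cases hβ : β ∈ Iio (0:ℝ)
      · rw [indicator_of_mem hβ]
        obtain ⟨n, hn⟩ := exists_nat_ge (-β)
        apply le_antisymm
        · apply iSup_le
          intro m
          by_cases hm : β ∈ Ico (-(m:ℝ)) 0
          · simp only [hfn, indicator_of_mem hm]; exact le_rfl
          · simp only [hfn, indicator_of_notMem hm]; exact zero_le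
        · refine le_trans (le_of_eq ?_) (le_iSup _ n)
          simp only [hfn]
          have hmem : β ∈ Ico (-(n:ℝ)) 0 := mem_Ico.2 ⟨by linarith, mem_Iio.1 hβ⟩
          exact (indicator_of_mem hmem (fun β => ENNReal.ofReal (u2 x β))).symm
      · rw [indicator_of_notMem hβ]
        have : ∀ n, fn n β = 0 := by
          intro n
          apply indicator_of_notMem
          intro hmem
          exact hβ (mem_Iio.2 hmem.2)
        simp [this]
    calc (∫⁻ β in Iio (0:ℝ), ENNReal.ofReal (u2 x β))
        = ∫⁻ β, (Iio (0:ℝ)).indicator (fun β => ENNReal.ofReal (u2 x β)) β :=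
          (lintegral_indicator measurableSet_Iio _).symm
      _ = ∫⁻ β, ⨆ n, fn n β := by rw [hsup]
      _ = ⨆ n, ∫⁻ β, fn n β := by rw [lintegral_iSup (μ := volume) hfnmeas hfnmono]
      _ = ⨆ n, ENNReal.ofReal (T2n n x) := by
          congr 1
          funext n
          simp only [hfn]
          rw [lintegral_indicator measurableSet_Ico]
          exact (ofReal_integral_eq_lintegral_ofReal (hu2int n x)
            (Eventually.of_forall (fun β => hu2nn x β))).symm
  set F2 : ℝ → ℝ := fun x => (⨆ n : ℕ, ENNReal.ofReal (T2n n x)).toReal with hF2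
  have hF2meas : Measurable F2 :=
    (Measurable.iSup (fun n => ENNReal.measurable_ofReal.comp (hT2n_meas n))).ennreal_toReal
  have hT2eq : ∀ x, (∫ β in Iio (0:ℝ), (L x β - μ (Icc 0 x))) = -F2 x := by
    intro x
    have hfe : (fun β => L x β - μ (Icc 0 x)) = fun β => -(u2 x β) := by
      funext β; simp only [hu2]; ring
    by_cases hi : IntegrableOn (u2 x) (Iio (0:ℝ))
    · rw [hfe, integral_neg, neg_inj]
      rw [integral_eq_lintegral_of_nonneg_ae
        (Eventually.of_forall (fun β => hu2nn x β))
        ((hu2meas x).aestronglyMeasurable), key2 x]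
    · have hi' : ¬ IntegrableOn (fun β => L x β - μ (Icc 0 x)) (Iio (0:ℝ)) := by
        intro hcon
        apply hi
        exact hcon.neg.congr
          (Eventually.of_forall (fun β => by simp only [hu2, Pi.neg_apply]; ring))
      rw [integral_undef hi']
      have htop : (∫⁻ β in Iio (0:ℝ), ENNReal.ofReal (u2 x β)) = ⊤ := by
        by_contra hne
        apply hi
        refine ⟨(hu2meas x).aestronglyMeasurable, ?_⟩
        rw [hasFiniteIntegral_iff_ofReal (Eventually.of_forall (fun β => hu2nn x β))]
        exact lt_top_iff_ne_top.2 hne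
      have hsup_top : (⨆ n : ℕ, ENNReal.ofReal (T2n n x)) = ⊤ := by
        rw [← key2 x]; exact htop
      simp [hF2, hsup_top]
  have hVeq : (fun x => choquet μ (Icc 0 x) f) = fun x => F1 x - F2 x := by
    funext x
    rw [choquet_eq]
    have h1 := hT1eq x
    have h2 := hT2eq x
    simp only [hL] at h1 h2
    rw [h1, h2]
    ring
  rw [hVeq]
  exact hF1meas.sub hF2meas

/-- uniform bound for the Volterra-Choquet operator on [0,1] -/
lemma V_bounded (h : Ctx μ p f g) (hbf : ∀ s, |f s| ≤ ee f g s) :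
    ∀ x ∈ Icc (0:ℝ) 1, |choquet μ (Icc 0 x) f| ≤
      (∫ β in Ioi (0:ℝ), Phi μ f g β) + ∫ β in Iio (0:ℝ), Phi μ f g (-β) := by
  intro x hx
  have hA : Icc (0:ℝ) x ⊆ Icc 0 1 := Icc_subset_Icc le_rfl hx.2
  set P1 := ∫ β in Ioi (0:ℝ), Phi μ f g β with hP1
  set P2 := ∫ β in Iio (0:ℝ), Phi μ f g (-β) with hP2
  have hP2nn : 0 ≤ P2 :=
    setIntegral_nonneg measurableSet_Iio (fun β _ => Phi_nonneg h (-β))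
  have hT1ub : (∫ β in Ioi (0:ℝ), lay μ (Icc 0 x) f β) ≤ P1 :=
    setIntegral_mono_on (int_Ioi h hA hbf) (Phi_int h) measurableSet_Ioi
      (fun β _ => lay_le_Phi h hA hbf β)
  have hT1nn : 0 ≤ ∫ β in Ioi (0:ℝ), lay μ (Icc 0 x) f β :=
    setIntegral_nonneg measurableSet_Ioi (fun β _ => lay_nonneg h.cap _ f β)
  have hT2ub : (∫ β in Iio (0:ℝ), (lay μ (Icc 0 x) f β - μ (Icc 0 x))) ≤ 0 :=
    setIntegral_nonpos measurableSet_Iio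
      (fun β _ => by linarith [lay_le h.cap (Icc 0 x) f β])
  have hT2lb : -P2 ≤ ∫ β in Iio (0:ℝ), (lay μ (Icc 0 x) f β - μ (Icc 0 x)) := by
    rw [hP2, ← integral_neg]
    apply setIntegral_mono_on (PhiNeg_int h).neg (int_Iio h hA hbf) measurableSet_Iio
    intro β hβ
    have := deficit_le_PhiNeg h hA hbf (mem_Iio.1 hβ)
    simp only [Pi.neg_apply]
    linarith
  rw [choquet_eq, abs_le]
  constructor
  · have : 0 ≤ P1 := le_trans hT1nn hT1ub
    linarith
  · linarith

/-- part 1 of the theorem -/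
lemma part1 (h : Ctx μ p f g) :
    Measurable (fun x => choquet μ (Icc 0 x) f) ∧
      IntegrableOn
        (fun β => μ ({t | β ≤ |choquet μ (Icc 0 t) f| ^ p} ∩ Icc 0 1)) (Ioi (0:ℝ)) := by
  have hbf : ∀ s, |f s| ≤ ee f g s := by
    intro s
    unfold ee
    have := abs_nonneg (f s); have := abs_nonneg (g s)
    linarith
  refine ⟨V_meas h, ?_⟩
  set M := (∫ β in Ioi (0:ℝ), Phi μ f g β) + ∫ β in Iio (0:ℝ), Phi μ f g (-β) with hM
  have hbdd := V_bounded h hbf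
  have hM0 : 0 ≤ M := le_trans (abs_nonneg _) (hbdd 0 ⟨le_rfl, zero_le_one⟩)
  have hMp0 : 0 ≤ M ^ p := Real.rpow_nonneg hM0 p
  have hlaymeas : Measurable (fun β => μ ({t | β ≤ |choquet μ (Icc 0 t) f| ^ p} ∩ Icc 0 1)) :=
    lay_meas h.cap (Icc 0 1) (fun t => |choquet μ (Icc 0 t) f| ^ p)
  apply Integrable.mono' (g := (Ioc (0:ℝ) (M^p)).indicator (fun _ => μ (Icc (0:ℝ) 1)))
  · exact ((integrable_indicator_iff measurableSet_Ioc).2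
      (integrableOn_const measure_Ioc_lt_top.ne)).integrableOn
  · exact hlaymeas.aestronglyMeasurable
  · refine (ae_restrict_iff' measurableSet_Ioi).2 (Eventually.of_forall (fun β hβ => ?_))
    have hβ0 : (0:ℝ) < β := hβ
    show ‖lay μ (Icc 0 1) (fun t => |choquet μ (Icc 0 t) f| ^ p) β‖ ≤ _
    rw [Real.norm_of_nonneg (lay_nonneg h.cap _ _ β)]
    by_cases hc : β ≤ M ^ p
    · rw [indicator_of_mem (mem_Ioc.2 ⟨hβ0, hc⟩)]
      exact lay_le h.cap _ _ β
    · rw [indicator_of_notMem (by simp only [mem_Ioc]; tauto)]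
      push_neg at hc
      have hempty : {t | β ≤ |choquet μ (Icc 0 t) f| ^ p} ∩ Icc 0 1 = ∅ := by
        ext t
        simp only [mem_inter_iff, mem_setOf_eq, mem_empty_iff_false, iff_false, not_and]
        intro hβt ht
        have h1 : |choquet μ (Icc 0 t) f| ≤ M := hbdd t ht
        have h2 : |choquet μ (Icc 0 t) f| ^ p ≤ M ^ p :=
          Real.rpow_le_rpow (abs_nonneg _) h1 (by linarith [h.hp])
        linarith
      show μ ({t | β ≤ |choquet μ (Icc 0 t) f| ^ p} ∩ Icc 0 1) ≤ _
      rw [hempty, h.cap.empty]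


end VCaux

/-- For `μ` monotone, submodular, continuous from below and above on the Borel subsets of
`[0,1]` and `1 < p < ∞`, the Volterra–Choquet operator maps `L_{p,μ}([0,1])` into itself
and `‖V(f) − V(g)‖_{L_{p,μ}} ≤ μ([0,1])·‖f − g‖_{L_{p,μ}}`. -/
theorem volterraChoquet_Lp_lipschitz
    (μ : Set ℝ → ℝ) (hμ0 : μ ∅ = 0)
    (hμmono : ∀ A B : Set ℝ, A ⊆ B → μ A ≤ μ B)
    (hμsub : ∀ A B : Set ℝ, μ (A ∪ B) + μ (A ∩ B) ≤ μ A + μ B)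
    (hμcb : ∀ A : ℕ → Set ℝ, (∀ k, MeasurableSet (A k)) → Monotone A →
      Tendsto (fun k => μ (A k)) atTop (𝓝 (μ (⋃ k, A k))))
    (hμca : ∀ A : ℕ → Set ℝ, (∀ k, MeasurableSet (A k)) → Antitone A →
      Tendsto (fun k => μ (A k)) atTop (𝓝 (μ (⋂ k, A k))))
    (p : ℝ) (hp : 1 < p)
    (f g : ℝ → ℝ) (hf : MemLp μ p f) (hg : MemLp μ p g) :
    MemLp μ p (fun x => choquet μ (Icc 0 x) f) ∧
    (choquet μ (Icc 0 1)
        (fun t => |choquet μ (Icc 0 t) f - choquet μ (Icc 0 t) g| ^ p)) ^ (1/p)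
      ≤ μ (Icc 0 1) *
        (choquet μ (Icc 0 1) (fun s => |f s - g s| ^ p)) ^ (1/p) := by
  obtain ⟨hfm, hfi⟩ := hf
  obtain ⟨hgm, hgi⟩ := hg
  have hcap : VCaux.Capacity μ :=
    { empty := hμ0, mono := fun {A B} hAB => hμmono A B hAB, submod := hμsub }
  have h : VCaux.Ctx μ p f g := ⟨hcap, hp, hfm, hgm, hfi, hgi, hμcb⟩
  have hp0 : (0:ℝ) < p := by linarith
  constructor
  · exact VCaux.part1 h
  · -- the Lipschitz bound
    set d : ℝ → ℝ := fun s => |f s - g s| with hd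
    have hd0 : ∀ s, 0 ≤ d s := fun s => abs_nonneg _
    have hdm : Measurable d := (hfm.sub hgm).abs
    set Nint := ∫ β in Ioi (0:ℝ), VCaux.lay μ (Icc 0 1) (fun s => |f s - g s| ^ p) β with hNint
    have hNrep : choquet μ (Icc 0 1) (fun s => |f s - g s| ^ p) = Nint :=
      VCaux.choquet_of_nonneg (fun s => Real.rpow_nonneg (abs_nonneg _) p)
    have hNint0 : 0 ≤ Nint :=
      setIntegral_nonneg measurableSet_Ioi (fun β _ => VCaux.lay_nonneg hcap _ _ β)
    set R := (μ (Icc (0:ℝ) 1)) ^ (1 - 1/p) * Nint ^ (1/p) with hR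
    have hmI0 : 0 ≤ μ (Icc (0:ℝ) 1) := hcap.nonneg _
    have hR0 : 0 ≤ R := by positivity
    have hRp0 : 0 ≤ R ^ p := Real.rpow_nonneg hR0 p
    -- pointwise bound
    have hub_f : ∀ s, |f s| ≤ VCaux.ee f g s := by
      intro s
      unfold VCaux.ee
      have := abs_nonneg (f s); have := abs_nonneg (g s); linarith
    have hub_g : ∀ s, |g s| ≤ VCaux.ee f g s := by
      intro s
      unfold VCaux.ee
      have := abs_nonneg (f s); have := abs_nonneg (g s); linarith
    have hvdb_g : ∀ s, |g s| + d s + 1 ≤ VCaux.ee f g s := by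
      intro s
      have h1 : d s ≤ |f s| + |g s| := abs_sub _ _
      unfold VCaux.ee
      have := abs_nonneg (f s); have := abs_nonneg (g s); linarith
    have hvdb_f : ∀ s, |f s| + d s + 1 ≤ VCaux.ee f g s := by
      intro s
      have h1 : d s ≤ |f s| + |g s| := abs_sub _ _
      unfold VCaux.ee
      have := abs_nonneg (f s); have := abs_nonneg (g s); linarith
    have hpoint : ∀ t ∈ Icc (0:ℝ) 1,
        |choquet μ (Icc 0 t) f - choquet μ (Icc 0 t) g| ≤ R := by
      intro t ht
      have hA : Icc (0:ℝ) t ⊆ Icc 0 1 := Icc_subset_Icc le_rfl ht.2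
      have h1 : choquet μ (Icc 0 t) f ≤ choquet μ (Icc 0 t) g +
          ∫ β in Ioi (0:ℝ), VCaux.lay μ (Icc 0 t) (fun s => |f s - g s|) β :=
        VCaux.choquet_diff_le h hA measurableSet_Icc hgm hdm hd0 hub_f hvdb_g
          (fun s => by have := le_abs_self (f s - g s); linarith)
      have h2 : choquet μ (Icc 0 t) g ≤ choquet μ (Icc 0 t) f +
          ∫ β in Ioi (0:ℝ), VCaux.lay μ (Icc 0 t) (fun s => |f s - g s|) β :=
        VCaux.choquet_diff_le h hA measurableSet_Icc hfm hdm hd0 hub_g hvdb_f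
          (fun s => by have := neg_abs_le (f s - g s); linarith)
      have h3 := VCaux.holder_S_le h hA
      rw [← hNint, ← hR] at h3
      rw [abs_le]
      constructor
      · linarith
      · linarith
    -- the outer layer estimate
    set h2fn : ℝ → ℝ := fun t => |choquet μ (Icc 0 t) f - choquet μ (Icc 0 t) g| ^ p
      with hh2fn
    have hh2nn : ∀ t, 0 ≤ h2fn t := fun t => Real.rpow_nonneg (abs_nonneg _) p
    have hLHSrep : choquet μ (Icc 0 1) h2fn =
        ∫ β in Ioi (0:ℝ), VCaux.lay μ (Icc 0 1) h2fn β :=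
      VCaux.choquet_of_nonneg hh2nn
    have hindint : Integrable ((Ioc (0:ℝ) (R^p)).indicator (fun _ => μ (Icc (0:ℝ) 1))) :=
      (integrable_indicator_iff measurableSet_Ioc).2
        (integrableOn_const measure_Ioc_lt_top.ne)
    have hlay_le : ∀ β ∈ Ioi (0:ℝ), VCaux.lay μ (Icc 0 1) h2fn β ≤
        (Ioc (0:ℝ) (R^p)).indicator (fun _ => μ (Icc (0:ℝ) 1)) β := by
      intro β hβ
      have hβ0 : (0:ℝ) < β := hβ
      by_cases hc : β ≤ R ^ p
      · rw [indicator_of_mem (mem_Ioc.2 ⟨hβ0, hc⟩)]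
        exact VCaux.lay_le hcap _ _ β
      · rw [indicator_of_notMem (by simp only [mem_Ioc]; tauto)]
        push_neg at hc
        have hempty : {t | β ≤ h2fn t} ∩ Icc 0 1 = ∅ := by
          ext t
          simp only [mem_inter_iff, mem_setOf_eq, mem_empty_iff_false, iff_false, not_and]
          intro hβt ht
          have hb1 : |choquet μ (Icc 0 t) f - choquet μ (Icc 0 t) g| ≤ R := hpoint t ht
          have hb2 : h2fn t ≤ R ^ p :=
            Real.rpow_le_rpow (abs_nonneg _) hb1 hp0.le
          linarith
        show μ ({t | β ≤ h2fn t} ∩ Icc 0 1) ≤ _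
        rw [hempty, hcap.empty]
    have hint2 : IntegrableOn (VCaux.lay μ (Icc 0 1) h2fn) (Ioi (0:ℝ)) := by
      apply Integrable.mono' hindint.integrableOn
        ((VCaux.lay_meas hcap _ _).aestronglyMeasurable)
      refine (ae_restrict_iff' measurableSet_Ioi).2 (Eventually.of_forall (fun β hβ => ?_))
      rw [Real.norm_of_nonneg (VCaux.lay_nonneg hcap _ _ β)]
      exact hlay_le β hβ
    have hCle : (∫ β in Ioi (0:ℝ), VCaux.lay μ (Icc 0 1) h2fn β) ≤ R ^ p * μ (Icc (0:ℝ) 1) := by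
      calc (∫ β in Ioi (0:ℝ), VCaux.lay μ (Icc 0 1) h2fn β)
          ≤ ∫ β in Ioi (0:ℝ), (Ioc (0:ℝ) (R^p)).indicator (fun _ => μ (Icc (0:ℝ) 1)) β :=
            setIntegral_mono_on hint2 hindint.integrableOn measurableSet_Ioi hlay_le
        _ ≤ ∫ β, (Ioc (0:ℝ) (R^p)).indicator (fun _ => μ (Icc (0:ℝ) 1)) β := by
            apply setIntegral_le_integral hindint
            exact Eventually.of_forall (fun β => indicator_nonneg (fun _ _ => hmI0) β)
        _ = R ^ p * μ (Icc (0:ℝ) 1) := by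
            rw [integral_indicator measurableSet_Ioc, setIntegral_const, Real.volume_real_Ioc,
              smul_eq_mul, max_eq_left (by linarith)]
            ring
    have hC0 : 0 ≤ ∫ β in Ioi (0:ℝ), VCaux.lay μ (Icc 0 1) h2fn β :=
      setIntegral_nonneg measurableSet_Ioi (fun β _ => VCaux.lay_nonneg hcap _ _ β)
    rw [hLHSrep, hNrep]
    calc (∫ β in Ioi (0:ℝ), VCaux.lay μ (Icc 0 1) h2fn β) ^ (1/p)
        ≤ (R ^ p * μ (Icc (0:ℝ) 1)) ^ (1/p) :=
          Real.rpow_le_rpow hC0 hCle (by positivity)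
      _ = R * (μ (Icc (0:ℝ) 1)) ^ (1/p) := by
          rw [Real.mul_rpow hRp0 hmI0, ← Real.rpow_mul hR0,
            mul_one_div_cancel hp0.ne', Real.rpow_one]
      _ = μ (Icc (0:ℝ) 1) * Nint ^ (1/p) := by
          rw [hR]
          have hmul : (μ (Icc (0:ℝ) 1)) ^ (1 - 1/p) * (μ (Icc (0:ℝ) 1)) ^ (1/p)
              = μ (Icc (0:ℝ) 1) := by
            rw [← Real.rpow_add' hmI0 (by rw [show (1 - 1/p) + (1/p) = 1 by ring]; norm_num)]
            rw [show (1 - 1/p) + (1/p) = 1 by ring, Real.rpow_one]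
          calc (μ (Icc (0:ℝ) 1)) ^ (1 - 1/p) * Nint ^ (1/p) * (μ (Icc (0:ℝ) 1)) ^ (1/p)
              = ((μ (Icc (0:ℝ) 1)) ^ (1 - 1/p) * (μ (Icc (0:ℝ) 1)) ^ (1/p)) * Nint ^ (1/p) := by
                ring
            _ = μ (Icc (0:ℝ) 1) * Nint ^ (1/p) := by rw [hmul]
end

section
/- Let μ(A) = γ(m(A)) be a distorted Lebesgue measure with γ nondecreasing, concave, continuous, γ(0)=0. Then the Volterra–Choquet operator V: C[0,1] → C[0,1], V(f)(x) = (C)∫_{[0,x]} f dμ, is a compact nonlinear operator: it is continuous and maps bounded subsets of C[0,1] to relatively compact subsets of C[0,1]. -/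
open MeasureTheory Set Filter Topology

namespace VolterraChoquetAux

/-! ### The level-set measure function -/

noncomputable def mv (f : ℝ → ℝ) (x β : ℝ) : ℝ :=
  (volume ({ω | β ≤ f ω} ∩ Icc 0 x)).toReal

lemma mv_nonneg (f : ℝ → ℝ) (x β : ℝ) : 0 ≤ mv f x β := ENNReal.toReal_nonneg

lemma vol_ne_top (f : ℝ → ℝ) (x β : ℝ) :
    volume ({ω | β ≤ f ω} ∩ Icc 0 x) ≠ ⊤ := by
  refine ne_top_of_le_ne_top ?_ (measure_mono inter_subset_right)
  simp [Real.volume_Icc]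

lemma mv_le (f : ℝ → ℝ) {x : ℝ} (hx : 0 ≤ x) (β : ℝ) : mv f x β ≤ x := by
  have h := measure_mono (μ := volume) (inter_subset_right :
    {ω | β ≤ f ω} ∩ Icc 0 x ⊆ Icc 0 x)
  rw [Real.volume_Icc, sub_zero] at h
  calc mv f x β ≤ (ENNReal.ofReal x).toReal :=
        ENNReal.toReal_mono ENNReal.ofReal_ne_top h
    _ = x := ENNReal.toReal_ofReal hx

lemma mv_antitone (f : ℝ → ℝ) (x : ℝ) : Antitone (mv f x) := by
  intro β₁ β₂ h
  exact ENNReal.toReal_mono (vol_ne_top f x β₁)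
    (measure_mono (inter_subset_inter_left _ (fun ω hω => le_trans h hω)))

lemma mv_mono_x (f : ℝ → ℝ) {x x' : ℝ} (h : x ≤ x') (β : ℝ) :
    mv f x β ≤ mv f x' β :=
  ENNReal.toReal_mono (vol_ne_top f x' β)
    (measure_mono (inter_subset_inter_right _ (Icc_subset_Icc_right h)))

lemma mv_lip (f : ℝ → ℝ) {x x' : ℝ} (h : x ≤ x') (β : ℝ) :
    mv f x' β ≤ mv f x β + (x' - x) := by
  have hsub : {ω | β ≤ f ω} ∩ Icc 0 x' ⊆ ({ω | β ≤ f ω} ∩ Icc 0 x) ∪ Ioc x x' := by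
    rintro ω ⟨hω, h0, h1⟩
    rcases le_or_gt ω x with hc | hc
    · exact Or.inl ⟨hω, h0, hc⟩
    · exact Or.inr ⟨hc, h1⟩
  have h1 : volume ({ω | β ≤ f ω} ∩ Icc 0 x') ≤
      volume ({ω | β ≤ f ω} ∩ Icc 0 x) + ENNReal.ofReal (x' - x) := by
    refine le_trans (measure_mono hsub) (le_trans (measure_union_le _ _) ?_)
    rw [Real.volume_Ioc]
  calc mv f x' β ≤ (volume ({ω | β ≤ f ω} ∩ Icc 0 x) + ENNReal.ofReal (x' - x)).toReal :=
        ENNReal.toReal_mono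
          (ENNReal.add_ne_top.2 ⟨vol_ne_top f x β, ENNReal.ofReal_ne_top⟩) h1
    _ = mv f x β + (x' - x) := by
        rw [ENNReal.toReal_add (vol_ne_top f x β) ENNReal.ofReal_ne_top,
          ENNReal.toReal_ofReal (by linarith)]
        rfl

lemma mv_eq_zero {f : ℝ → ℝ} {R x β : ℝ} (hx : x ∈ Icc (0:ℝ) 1)
    (hf : ∀ ω ∈ Icc (0:ℝ) 1, f ω ≤ R) (hβ : R < β) : mv f x β = 0 := by
  have : {ω | β ≤ f ω} ∩ Icc 0 x = ∅ := by
    ext ω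
    simp only [mem_inter_iff, mem_setOf_eq, mem_empty_iff_false, iff_false, not_and]
    intro hω hmem
    have := hf ω ⟨hmem.1, le_trans hmem.2 hx.2⟩
    linarith
  simp [mv, this]

lemma mv_eq_full {f : ℝ → ℝ} {R x β : ℝ} (hx : x ∈ Icc (0:ℝ) 1)
    (hf : ∀ ω ∈ Icc (0:ℝ) 1, -R ≤ f ω) (hβ : β < -R) : mv f x β = x := by
  have : {ω | β ≤ f ω} ∩ Icc 0 x = Icc 0 x := by
    refine inter_eq_self_of_subset_right (fun ω hω => ?_)
    have := hf ω ⟨hω.1, le_trans hω.2 hx.2⟩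
    simp only [mem_setOf_eq]
    linarith
  rw [mv, this, Real.volume_Icc, sub_zero, ENNReal.toReal_ofReal hx.1]

lemma mv_comp {f g : ℝ → ℝ} {δ x : ℝ} (hx : x ∈ Icc (0:ℝ) 1)
    (h : ∀ ω ∈ Icc (0:ℝ) 1, g ω ≤ f ω + δ) (β : ℝ) :
    mv g x β ≤ mv f x (β - δ) := by
  refine ENNReal.toReal_mono (vol_ne_top f x (β - δ))
    (measure_mono (fun ω hω => ⟨?_, hω.2⟩))
  have h2 := h ω ⟨hω.2.1, le_trans hω.2.2 hx.2⟩
  have h1 : β ≤ g ω := hω.1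
  simp only [mem_setOf_eq]
  linarith

/-! ### Integrability helpers -/

lemma integrableOn_Ioi_of_antitone {g : ℝ → ℝ} (hg : Antitone g) {C B : ℝ}
    (hb : ∀ β, |g β| ≤ C) (h0 : ∀ β, B < β → g β = 0) :
    IntegrableOn g (Ioi (0:ℝ)) := by
  set B' := max B 0 with hB'
  have hB0 : (0:ℝ) ≤ B' := le_max_right _ _
  have hsplit : Ioc (0:ℝ) B' ∪ Ioi B' = Ioi 0 := Ioc_union_Ioi_eq_Ioi hB0
  rw [← hsplit]
  refine IntegrableOn.union ?_ ?_
  · refine ⟨hg.measurable.aestronglyMeasurable, ?_⟩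
    refine HasFiniteIntegral.of_bounded (C := C) (ae_of_all _ (fun β => ?_))
    simpa using hb β
  · refine (integrableOn_congr_fun (fun β hβ => ?_) measurableSet_Ioi).2
      integrableOn_zero
    exact h0 β (lt_of_le_of_lt (le_max_left _ _) hβ)

lemma integrableOn_Iio_of_antitone {g : ℝ → ℝ} (hg : Antitone g) {C B : ℝ}
    (hb : ∀ β, |g β| ≤ C) (h0 : ∀ β, β < B → g β = 0) :
    IntegrableOn g (Iio (0:ℝ)) := by
  set B' := min B 0 with hB'
  have hB0 : B' ≤ (0:ℝ) := min_le_right _ _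
  have hsplit : Iio B' ∪ Ico B' 0 = Iio (0:ℝ) := Iio_union_Ico_eq_Iio hB0
  rw [← hsplit]
  refine IntegrableOn.union ?_ ?_
  · refine (integrableOn_congr_fun (fun β hβ => ?_) measurableSet_Iio).2
      integrableOn_zero
    exact h0 β (lt_of_lt_of_le hβ (min_le_left _ _))
  · refine ⟨hg.measurable.aestronglyMeasurable, ?_⟩
    refine HasFiniteIntegral.of_bounded (C := C) (ae_of_all _ (fun β => ?_))
    simpa using hb β

/-! ### Splitting and shifting one-dimensional integrals -/

lemma integral_Ioi_trunc {g : ℝ → ℝ} {R : ℝ} (hR : 0 ≤ R) (hint : IntegrableOn g (Ioi (0:ℝ)))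
    (h0 : ∀ β, R < β → g β = 0) :
    ∫ β in Ioi (0:ℝ), g β = ∫ β in Ioc (0:ℝ) R, g β := by
  have hu : Ioc (0:ℝ) R ∪ Ioi R = Ioi 0 := Ioc_union_Ioi_eq_Ioi hR
  have h2 : ∫ β in Ioi R, g β = 0 := by
    rw [setIntegral_congr_fun measurableSet_Ioi (fun β hβ => h0 β hβ)]
    simp
  rw [← hu] at hint ⊢
  rw [setIntegral_union (Ioc_disjoint_Ioi le_rfl) measurableSet_Ioi
    (hint.mono_set subset_union_left) (hint.mono_set subset_union_right), h2, add_zero]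

lemma integral_Iio_trunc {g : ℝ → ℝ} {R : ℝ} (hR : 0 ≤ R) (hint : IntegrableOn g (Iio (0:ℝ)))
    (h0 : ∀ β, β < -R → g β = 0) :
    ∫ β in Iio (0:ℝ), g β = ∫ β in Ico (-R) 0, g β := by
  have hu : Iio (-R) ∪ Ico (-R) 0 = Iio (0:ℝ) := Iio_union_Ico_eq_Iio (by linarith)
  have h2 : ∫ β in Iio (-R), g β = 0 := by
    rw [setIntegral_congr_fun measurableSet_Iio (fun β hβ => h0 β hβ)]
    simp
  rw [← hu] at hint ⊢
  rw [setIntegral_union ((Iio_disjoint_Ici le_rfl).mono_right Ico_subset_Ici_self)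
    measurableSet_Ico (hint.mono_set subset_union_left) (hint.mono_set subset_union_right),
    h2, zero_add]

lemma integral_Ioi_split {g : ℝ → ℝ} {a : ℝ} (ha : a ≤ 0) (hint : IntegrableOn g (Ioi a)) :
    ∫ β in Ioi a, g β = (∫ β in Ioc a 0, g β) + ∫ β in Ioi (0:ℝ), g β := by
  have hu : Ioc a 0 ∪ Ioi (0:ℝ) = Ioi a := Ioc_union_Ioi_eq_Ioi ha
  rw [← hu] at hint ⊢
  rw [setIntegral_union (Ioc_disjoint_Ioi le_rfl) measurableSet_Ioi
    (hint.mono_set subset_union_left) (hint.mono_set subset_union_right)]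

lemma integral_Iio_split {g : ℝ → ℝ} {a : ℝ} (ha : a ≤ 0) (hint : IntegrableOn g (Iio (0:ℝ))) :
    ∫ β in Iio (0:ℝ), g β = (∫ β in Iio a, g β) + ∫ β in Ico a 0, g β := by
  have hu : Iio a ∪ Ico a 0 = Iio (0:ℝ) := Iio_union_Ico_eq_Iio ha
  rw [← hu] at hint ⊢
  rw [setIntegral_union ((Iio_disjoint_Ici le_rfl).mono_right Ico_subset_Ici_self)
    measurableSet_Ico (hint.mono_set subset_union_left) (hint.mono_set subset_union_right)]

lemma shift_Ioi (g : ℝ → ℝ) (δ : ℝ) :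
    ∫ β in Ioi (0:ℝ), g (β - δ) = ∫ β in Ioi (-δ), g β := by
  rw [← integral_indicator measurableSet_Ioi, ← integral_indicator measurableSet_Ioi]
  have h : (Ioi (0:ℝ)).indicator (fun β => g (β - δ)) =
      fun β => (Ioi (-δ)).indicator g (β - δ) := by
    funext β
    by_cases hb : β ∈ Ioi (0:ℝ)
    · rw [indicator_of_mem hb, indicator_of_mem]
      simp only [mem_Ioi] at hb ⊢
      linarith
    · rw [indicator_of_notMem hb, indicator_of_notMem]
      simp only [mem_Ioi, not_lt] at hb ⊢
      linarith
  rw [h, integral_sub_right_eq_self (fun β => (Ioi (-δ)).indicator g β) δ]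

lemma shift_Iio (g : ℝ → ℝ) (δ : ℝ) :
    ∫ β in Iio (0:ℝ), g (β - δ) = ∫ β in Iio (-δ), g β := by
  rw [← integral_indicator measurableSet_Iio, ← integral_indicator measurableSet_Iio]
  have h : (Iio (0:ℝ)).indicator (fun β => g (β - δ)) =
      fun β => (Iio (-δ)).indicator g (β - δ) := by
    funext β
    by_cases hb : β ∈ Iio (0:ℝ)
    · rw [indicator_of_mem hb, indicator_of_mem]
      simp only [mem_Iio] at hb ⊢
      linarith
    · rw [indicator_of_notMem hb, indicator_of_notMem]
      simp only [mem_Iio, not_lt] at hb ⊢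
      linarith
  rw [h, integral_sub_right_eq_self (fun β => (Iio (-δ)).indicator g β) δ]

/-! ### Properties of the distortion γ -/

section Gamma

variable {γ : ℝ → ℝ} (hγmono : MonotoneOn γ (Icc 0 1)) (hγconc : ConcaveOn ℝ (Icc 0 1) γ)
  (hγcont : ContinuousOn γ (Icc 0 1)) (hγ0 : γ 0 = 0)

omit hγmono hγconc hγcont hγ0 in
lemma small_helper {R ε t : ℝ} (hR0 : 0 ≤ R) (hε : 0 < ε) (ht : 0 ≤ t)
    (h : t < ε / (2 * R + 1)) : 2 * (t * R) < ε := by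
  have h1 : (ε / (2 * R + 1)) * (2 * R + 1) = ε := div_mul_cancel₀ ε (by positivity)
  nlinarith

include hγmono hγ0 in
lemma γ_nonneg {t : ℝ} (ht : t ∈ Icc (0:ℝ) 1) : 0 ≤ γ t := by
  have := hγmono (left_mem_Icc.2 zero_le_one) ht ht.1
  linarith

include hγconc hγ0 in
lemma γ_subadd {a b : ℝ} (ha : 0 ≤ a) (hb : 0 ≤ b) (hab : a + b ≤ 1) :
    γ (a + b) ≤ γ a + γ b := by
  rcases eq_or_lt_of_le (by linarith : (0:ℝ) ≤ a + b) with h0 | hpos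
  · have ha0 : a = 0 := by linarith
    have hb0 : b = 0 := by linarith
    simp [ha0, hb0, hγ0]
  · have hmem : a + b ∈ Icc (0:ℝ) 1 := ⟨by linarith, hab⟩
    have h0mem : (0:ℝ) ∈ Icc (0:ℝ) 1 := ⟨le_rfl, zero_le_one⟩
    have hA := hγconc.2 hmem h0mem (by positivity : (0:ℝ) ≤ a / (a+b))
      (by positivity : (0:ℝ) ≤ b / (a+b)) (by field_simp)
    have hB := hγconc.2 hmem h0mem (by positivity : (0:ℝ) ≤ b / (a+b))
      (by positivity : (0:ℝ) ≤ a / (a+b)) (by field_simp; ring)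
    have e1 : (a / (a+b)) • (a+b) + (b / (a+b)) • (0:ℝ) = a := by
      rw [smul_eq_mul, smul_eq_mul]
      field_simp
      ring
    have e2 : (b / (a+b)) • (a+b) + (a / (a+b)) • (0:ℝ) = b := by
      rw [smul_eq_mul, smul_eq_mul]
      field_simp
      ring
    rw [e1] at hA
    rw [e2] at hB
    have hsum : (a / (a+b)) * γ (a+b) + (b / (a+b)) * γ (a+b) = γ (a+b) := by
      field_simp
    simp only [smul_eq_mul, hγ0, mul_zero, add_zero] at hA hB
    linarith

include hγmono hγ0 in
lemma G_bdd {f : ℝ → ℝ} {x : ℝ} (hx : x ∈ Icc (0:ℝ) 1) (β : ℝ) :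
    |γ (mv f x β)| ≤ γ 1 := by
  have h1 : (1:ℝ) ∈ Icc (0:ℝ) 1 := ⟨zero_le_one, le_rfl⟩
  have hmem : mv f x β ∈ Icc (0:ℝ) 1 := ⟨mv_nonneg f x β, le_trans (mv_le f hx.1 β) hx.2⟩
  rw [abs_of_nonneg (γ_nonneg hγmono hγ0 hmem)]
  exact hγmono hmem h1 hmem.2

include hγmono hγ0 in
lemma G2_bdd {f : ℝ → ℝ} {x : ℝ} (hx : x ∈ Icc (0:ℝ) 1) (β : ℝ) :
    |γ (mv f x β) - γ x| ≤ γ 1 := by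
  have h1 : (1:ℝ) ∈ Icc (0:ℝ) 1 := ⟨zero_le_one, le_rfl⟩
  have hmem : mv f x β ∈ Icc (0:ℝ) 1 := ⟨mv_nonneg f x β, le_trans (mv_le f hx.1 β) hx.2⟩
  have h2 : γ (mv f x β) ≤ γ x := hγmono hmem hx (mv_le f hx.1 β)
  have h3 : γ x ≤ γ 1 := hγmono hx h1 hx.2
  have h4 : 0 ≤ γ (mv f x β) := γ_nonneg hγmono hγ0 hmem
  rw [abs_of_nonpos (by linarith)]
  linarith

include hγmono in
lemma G_anti' {f : ℝ → ℝ} {x : ℝ} (hx : x ∈ Icc (0:ℝ) 1) :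
    Antitone (fun β => γ (mv f x β)) := by
  intro β₁ β₂ h
  have m1 : mv f x β₁ ∈ Icc (0:ℝ) 1 := ⟨mv_nonneg f x _, le_trans (mv_le f hx.1 _) hx.2⟩
  have m2 : mv f x β₂ ∈ Icc (0:ℝ) 1 := ⟨mv_nonneg f x _, le_trans (mv_le f hx.1 _) hx.2⟩
  exact hγmono m2 m1 (mv_antitone f x h)

include hγmono in
lemma G_anti {f : ℝ → ℝ} {x : ℝ} (hx : x ∈ Icc (0:ℝ) 1) (δ : ℝ) :
    Antitone (fun β => γ (mv f x (β - δ))) := by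
  intro β₁ β₂ h
  have m1 : mv f x (β₁ - δ) ∈ Icc (0:ℝ) 1 :=
    ⟨mv_nonneg f x _, le_trans (mv_le f hx.1 _) hx.2⟩
  have m2 : mv f x (β₂ - δ) ∈ Icc (0:ℝ) 1 :=
    ⟨mv_nonneg f x _, le_trans (mv_le f hx.1 _) hx.2⟩
  exact hγmono m2 m1 (mv_antitone f x (by linarith))

include hγmono hγ0 in
lemma int_Ioi {f : ℝ → ℝ} {R x : ℝ} (hx : x ∈ Icc (0:ℝ) 1)
    (hfb : ∀ ω ∈ Icc (0:ℝ) 1, |f ω| ≤ R) (δ : ℝ) :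
    IntegrableOn (fun β => γ (mv f x (β - δ))) (Ioi (0:ℝ)) := by
  refine integrableOn_Ioi_of_antitone (G_anti hγmono hx δ) (C := γ 1) (B := R + δ)
    (fun β => G_bdd hγmono hγ0 hx _) (fun β hβ => ?_)
  rw [mv_eq_zero hx (fun ω hω => (abs_le.1 (hfb ω hω)).2) (by linarith), hγ0]

include hγmono hγ0 in
lemma int_Iio {f : ℝ → ℝ} {R x : ℝ} (hx : x ∈ Icc (0:ℝ) 1)
    (hfb : ∀ ω ∈ Icc (0:ℝ) 1, |f ω| ≤ R) (δ : ℝ) :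
    IntegrableOn (fun β => γ (mv f x (β - δ)) - γ x) (Iio (0:ℝ)) := by
  refine integrableOn_Iio_of_antitone
    (fun β₁ β₂ h => by
      have := G_anti hγmono (f := f) hx δ h
      simpa using sub_le_sub_right this (γ x))
    (C := γ 1) (B := -R + δ)
    (fun β => G2_bdd hγmono hγ0 hx _) (fun β hβ => ?_)
  rw [mv_eq_full hx (fun ω hω => neg_le_of_abs_le (hfb ω hω)) (by linarith), sub_self]

include hγmono hγ0 in
lemma int_Ioi' {f : ℝ → ℝ} {R x : ℝ} (hx : x ∈ Icc (0:ℝ) 1)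
    (hfb : ∀ ω ∈ Icc (0:ℝ) 1, |f ω| ≤ R) :
    IntegrableOn (fun β => γ (mv f x β)) (Ioi (0:ℝ)) := by
  have := int_Ioi hγmono hγ0 hx hfb 0
  simpa using this

include hγmono hγ0 in
lemma int_Iio' {f : ℝ → ℝ} {R x : ℝ} (hx : x ∈ Icc (0:ℝ) 1)
    (hfb : ∀ ω ∈ Icc (0:ℝ) 1, |f ω| ≤ R) :
    IntegrableOn (fun β => γ (mv f x β) - γ x) (Iio (0:ℝ)) := by
  have := int_Iio hγmono hγ0 hx hfb 0
  simpa using this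

/-! ### The Volterra–Choquet operator -/

omit hγmono hγconc hγ0 in
lemma chq_eq {f : ℝ → ℝ} {x : ℝ} (hx : x ∈ Icc (0:ℝ) 1) :
    choquet (fun A => γ (volume A).toReal) (Icc 0 x) f
      = (∫ β in Ioi (0:ℝ), γ (mv f x β)) + ∫ β in Iio (0:ℝ), (γ (mv f x β) - γ x) := by
  have hvol : (volume (Icc (0:ℝ) x)).toReal = x := by
    rw [Real.volume_Icc, sub_zero, ENNReal.toReal_ofReal hx.1]
  simp only [choquet, mv, hvol]

include hγmono hγ0 in
lemma chq_rep {f : ℝ → ℝ} {R x : ℝ} (hx : x ∈ Icc (0:ℝ) 1) (hR : 0 ≤ R)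
    (hfb : ∀ ω ∈ Icc (0:ℝ) 1, |f ω| ≤ R) :
    choquet (fun A => γ (volume A).toReal) (Icc 0 x) f
      = (∫ β in Ioc (0:ℝ) R, γ (mv f x β)) + ∫ β in Ico (-R) 0, (γ (mv f x β) - γ x) := by
  rw [chq_eq hx,
    integral_Ioi_trunc hR (int_Ioi' hγmono hγ0 hx hfb) (fun β hβ => by
      rw [mv_eq_zero hx (fun ω hω => (abs_le.1 (hfb ω hω)).2) hβ, hγ0]),
    integral_Iio_trunc hR (int_Iio' hγmono hγ0 hx hfb) (fun β hβ => by
      rw [mv_eq_full hx (fun ω hω => neg_le_of_abs_le (hfb ω hω)) hβ, sub_self])]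

include hγmono hγ0 in
lemma chq_bound {f : ℝ → ℝ} {R x : ℝ} (hx : x ∈ Icc (0:ℝ) 1) (hR : 0 ≤ R)
    (hfb : ∀ ω ∈ Icc (0:ℝ) 1, |f ω| ≤ R) :
    |choquet (fun A => γ (volume A).toReal) (Icc 0 x) f| ≤ 2 * (γ 1 * R) := by
  rw [chq_rep hγmono hγ0 hx hR hfb]
  have hv1 : (volume (Ioc (0:ℝ) R)).toReal = R := by
    rw [Real.volume_Ioc, sub_zero, ENNReal.toReal_ofReal hR]
  have hv2 : (volume (Ico (-R) (0:ℝ))).toReal = R := by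
    rw [Real.volume_Ico, sub_neg_eq_add, zero_add, ENNReal.toReal_ofReal hR]
  have h1 : ‖∫ β in Ioc (0:ℝ) R, γ (mv f x β)‖ ≤ γ 1 * (volume (Ioc (0:ℝ) R)).toReal := by
    refine norm_setIntegral_le_of_norm_le_const_ae' ?_
      (ae_of_all _ (fun β _ => ?_))
    · rw [Real.volume_Ioc]; exact ENNReal.ofReal_lt_top
    · rw [Real.norm_eq_abs]; exact G_bdd hγmono hγ0 hx β
  have h2 : ‖∫ β in Ico (-R) (0:ℝ), (γ (mv f x β) - γ x)‖ ≤
      γ 1 * (volume (Ico (-R) (0:ℝ))).toReal := by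
    refine norm_setIntegral_le_of_norm_le_const_ae' ?_
      (ae_of_all _ (fun β _ => ?_))
    · rw [Real.volume_Ico]; exact ENNReal.ofReal_lt_top
    · rw [Real.norm_eq_abs]; exact G2_bdd hγmono hγ0 hx β
  rw [hv1] at h1
  rw [hv2] at h2
  rw [Real.norm_eq_abs] at h1 h2
  calc |(∫ β in Ioc (0:ℝ) R, γ (mv f x β)) + ∫ β in Ico (-R) 0, (γ (mv f x β) - γ x)|
      ≤ |∫ β in Ioc (0:ℝ) R, γ (mv f x β)| + |∫ β in Ico (-R) 0, (γ (mv f x β) - γ x)| :=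
        abs_add_le _ _
    _ ≤ 2 * (γ 1 * R) := by linarith

include hγmono hγconc hγ0 in
lemma chq_mod {f : ℝ → ℝ} {R x x' : ℝ} (hx : x ∈ Icc (0:ℝ) 1) (hx' : x' ∈ Icc (0:ℝ) 1)
    (hxx : x ≤ x') (hR : 0 ≤ R) (hfb : ∀ ω ∈ Icc (0:ℝ) 1, |f ω| ≤ R) :
    |choquet (fun A => γ (volume A).toReal) (Icc 0 x') f
      - choquet (fun A => γ (volume A).toReal) (Icc 0 x) f| ≤ 2 * (γ (x' - x) * R) := by
  have hΔ : x' - x ∈ Icc (0:ℝ) 1 := ⟨by linarith, by have := hx.1; have := hx'.2; linarith⟩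
  have hγΔ : 0 ≤ γ (x' - x) := γ_nonneg hγmono hγ0 hΔ
  -- pointwise estimates
  have key1 : ∀ β, |γ (mv f x' β) - γ (mv f x β)| ≤ γ (x' - x) := by
    intro β
    have m1 : mv f x β ∈ Icc (0:ℝ) 1 := ⟨mv_nonneg f x β, le_trans (mv_le f hx.1 β) hx.2⟩
    have m2 : mv f x' β ∈ Icc (0:ℝ) 1 := ⟨mv_nonneg f x' β, le_trans (mv_le f hx'.1 β) hx'.2⟩
    have m3 : mv f x β + (x' - x) ∈ Icc (0:ℝ) 1 :=
      ⟨by have := m1.1; linarith, by have := mv_le f hx.1 β; have := hx'.2; linarith⟩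
    have hlow : γ (mv f x β) ≤ γ (mv f x' β) := hγmono m1 m2 (mv_mono_x f hxx β)
    have hup : γ (mv f x' β) ≤ γ (mv f x β) + γ (x' - x) := by
      calc γ (mv f x' β) ≤ γ (mv f x β + (x' - x)) := hγmono m2 m3 (mv_lip f hxx β)
        _ ≤ γ (mv f x β) + γ (x' - x) := γ_subadd hγconc hγ0 m1.1 hΔ.1 m3.2
    rw [abs_le]
    constructor <;> linarith
  have keyx : 0 ≤ γ x' - γ x ∧ γ x' - γ x ≤ γ (x' - x) := by
    constructor
    · have := hγmono hx hx' hxx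
      linarith
    · have : γ x' ≤ γ x + γ (x' - x) := by
        have e : x + (x' - x) = x' := by ring
        calc γ x' = γ (x + (x' - x)) := by rw [e]
          _ ≤ γ x + γ (x' - x) := γ_subadd hγconc hγ0 hx.1 hΔ.1 (by rw [e]; exact hx'.2)
      linarith
  have key0 : ∀ β, 0 ≤ γ (mv f x' β) - γ (mv f x β) := by
    intro β
    have m1 : mv f x β ∈ Icc (0:ℝ) 1 := ⟨mv_nonneg f x β, le_trans (mv_le f hx.1 β) hx.2⟩
    have m2 : mv f x' β ∈ Icc (0:ℝ) 1 := ⟨mv_nonneg f x' β, le_trans (mv_le f hx'.1 β) hx'.2⟩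
    have := hγmono m1 m2 (mv_mono_x f hxx β)
    linarith
  have key2 : ∀ β, |(γ (mv f x' β) - γ x') - (γ (mv f x β) - γ x)| ≤ γ (x' - x) := by
    intro β
    have h1 := key1 β
    have h0 := key0 β
    rw [abs_le] at h1 ⊢
    constructor
    · linarith [keyx.1, keyx.2, h0]
    · linarith [keyx.1, keyx.2, h1.2]
  -- rewrite both values with the representation
  rw [chq_rep hγmono hγ0 hx hR hfb, chq_rep hγmono hγ0 hx' hR hfb]
  have i1 : IntegrableOn (fun β => γ (mv f x β)) (Ioc (0:ℝ) R) :=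
    (int_Ioi' hγmono hγ0 hx hfb).mono_set Ioc_subset_Ioi_self
  have i1' : IntegrableOn (fun β => γ (mv f x' β)) (Ioc (0:ℝ) R) :=
    (int_Ioi' hγmono hγ0 hx' hfb).mono_set Ioc_subset_Ioi_self
  have i2 : IntegrableOn (fun β => γ (mv f x β) - γ x) (Ico (-R) (0:ℝ)) :=
    (int_Iio' hγmono hγ0 hx hfb).mono_set Ico_subset_Iio_self
  have i2' : IntegrableOn (fun β => γ (mv f x' β) - γ x') (Ico (-R) (0:ℝ)) :=
    (int_Iio' hγmono hγ0 hx' hfb).mono_set Ico_subset_Iio_self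
  have e1 : (∫ β in Ioc (0:ℝ) R, γ (mv f x' β)) - ∫ β in Ioc (0:ℝ) R, γ (mv f x β)
      = ∫ β in Ioc (0:ℝ) R, (γ (mv f x' β) - γ (mv f x β)) := (integral_sub i1' i1).symm
  have e2 : (∫ β in Ico (-R) (0:ℝ), (γ (mv f x' β) - γ x'))
        - ∫ β in Ico (-R) (0:ℝ), (γ (mv f x β) - γ x)
      = ∫ β in Ico (-R) (0:ℝ), ((γ (mv f x' β) - γ x') - (γ (mv f x β) - γ x)) :=
    (integral_sub i2' i2).symm
  have hv1 : (volume (Ioc (0:ℝ) R)).toReal = R := by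
    rw [Real.volume_Ioc, sub_zero, ENNReal.toReal_ofReal hR]
  have hv2 : (volume (Ico (-R) (0:ℝ))).toReal = R := by
    rw [Real.volume_Ico, sub_neg_eq_add, zero_add, ENNReal.toReal_ofReal hR]
  have b1 : ‖∫ β in Ioc (0:ℝ) R, (γ (mv f x' β) - γ (mv f x β))‖
      ≤ γ (x' - x) * (volume (Ioc (0:ℝ) R)).toReal := by
    refine norm_setIntegral_le_of_norm_le_const_ae' ?_
      (ae_of_all _ (fun β _ => ?_))
    · rw [Real.volume_Ioc]; exact ENNReal.ofReal_lt_top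
    · rw [Real.norm_eq_abs]; exact key1 β
  have b2 : ‖∫ β in Ico (-R) (0:ℝ), ((γ (mv f x' β) - γ x') - (γ (mv f x β) - γ x))‖
      ≤ γ (x' - x) * (volume (Ico (-R) (0:ℝ))).toReal := by
    refine norm_setIntegral_le_of_norm_le_const_ae' ?_
      (ae_of_all _ (fun β _ => ?_))
    · rw [Real.volume_Ico]; exact ENNReal.ofReal_lt_top
    · rw [Real.norm_eq_abs]; exact key2 β
  rw [hv1] at b1
  rw [hv2] at b2
  rw [Real.norm_eq_abs] at b1 b2
  have : (∫ β in Ioc (0:ℝ) R, γ (mv f x' β)) + (∫ β in Ico (-R) 0, (γ (mv f x' β) - γ x'))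
      - ((∫ β in Ioc (0:ℝ) R, γ (mv f x β)) + ∫ β in Ico (-R) 0, (γ (mv f x β) - γ x))
      = (∫ β in Ioc (0:ℝ) R, (γ (mv f x' β) - γ (mv f x β)))
        + ∫ β in Ico (-R) (0:ℝ), ((γ (mv f x' β) - γ x') - (γ (mv f x β) - γ x)) := by
    rw [← e1, ← e2]; ring
  rw [this]
  calc |(∫ β in Ioc (0:ℝ) R, (γ (mv f x' β) - γ (mv f x β)))
        + ∫ β in Ico (-R) (0:ℝ), ((γ (mv f x' β) - γ x') - (γ (mv f x β) - γ x))|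
      ≤ |∫ β in Ioc (0:ℝ) R, (γ (mv f x' β) - γ (mv f x β))|
        + |∫ β in Ico (-R) (0:ℝ), ((γ (mv f x' β) - γ x') - (γ (mv f x β) - γ x))| :=
        abs_add_le _ _
    _ ≤ 2 * (γ (x' - x) * R) := by linarith

include hγmono hγ0 in
lemma chq_shift {f g : ℝ → ℝ} {Rf Rg x δ : ℝ} (hx : x ∈ Icc (0:ℝ) 1) (hδ : 0 ≤ δ)
    (hfb : ∀ ω ∈ Icc (0:ℝ) 1, |f ω| ≤ Rf) (hgb : ∀ ω ∈ Icc (0:ℝ) 1, |g ω| ≤ Rg)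
    (hfg : ∀ ω ∈ Icc (0:ℝ) 1, g ω ≤ f ω + δ) :
    choquet (fun A => γ (volume A).toReal) (Icc 0 x) g
      ≤ choquet (fun A => γ (volume A).toReal) (Icc 0 x) f + 2 * (γ 1 * δ) := by
  have hmδ : -δ ≤ (0:ℝ) := neg_nonpos.2 hδ
  -- monotone comparison with the shifted integrand
  have h1 : (∫ β in Ioi (0:ℝ), γ (mv g x β)) ≤ ∫ β in Ioi (0:ℝ), γ (mv f x (β - δ)) := by
    refine setIntegral_mono_on (int_Ioi' hγmono hγ0 hx hgb) (int_Ioi hγmono hγ0 hx hfb δ)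
      measurableSet_Ioi (fun β _ => ?_)
    have m1 : mv g x β ∈ Icc (0:ℝ) 1 := ⟨mv_nonneg g x β, le_trans (mv_le g hx.1 β) hx.2⟩
    have m2 : mv f x (β - δ) ∈ Icc (0:ℝ) 1 :=
      ⟨mv_nonneg f x _, le_trans (mv_le f hx.1 _) hx.2⟩
    exact hγmono m1 m2 (mv_comp hx hfg β)
  have h2 : (∫ β in Iio (0:ℝ), (γ (mv g x β) - γ x))
      ≤ ∫ β in Iio (0:ℝ), (γ (mv f x (β - δ)) - γ x) := by
    refine setIntegral_mono_on (int_Iio' hγmono hγ0 hx hgb) (int_Iio hγmono hγ0 hx hfb δ)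
      measurableSet_Iio (fun β _ => ?_)
    have m1 : mv g x β ∈ Icc (0:ℝ) 1 := ⟨mv_nonneg g x β, le_trans (mv_le g hx.1 β) hx.2⟩
    have m2 : mv f x (β - δ) ∈ Icc (0:ℝ) 1 :=
      ⟨mv_nonneg f x _, le_trans (mv_le f hx.1 _) hx.2⟩
    have := hγmono m1 m2 (mv_comp hx hfg β)
    linarith
  -- the change of variables
  have hs1 : (∫ β in Ioi (0:ℝ), γ (mv f x (β - δ))) = ∫ β in Ioi (-δ), γ (mv f x β) :=
    shift_Ioi (fun t => γ (mv f x t)) δ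
  have hs2 : (∫ β in Iio (0:ℝ), (γ (mv f x (β - δ)) - γ x))
      = ∫ β in Iio (-δ), (γ (mv f x β) - γ x) :=
    shift_Iio (fun t => γ (mv f x t) - γ x) δ
  -- split the shifted domains
  have iIoc : IntegrableOn (fun β => γ (mv f x β)) (Ioc (-δ) (0:ℝ)) := by
    refine ⟨(G_anti' hγmono (f := f) hx).measurable.aestronglyMeasurable, ?_⟩
    refine HasFiniteIntegral.of_bounded (C := γ 1) (ae_of_all _ (fun β => ?_))
    simpa using G_bdd hγmono hγ0 hx β
  have iIco : IntegrableOn (fun β => γ (mv f x β) - γ x) (Ico (-δ) (0:ℝ)) := by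
    have hanti : Antitone (fun β => γ (mv f x β) - γ x) := fun a b h => by
      have := G_anti' hγmono (f := f) hx h
      simp only at this ⊢
      linarith
    refine ⟨hanti.measurable.aestronglyMeasurable, ?_⟩
    refine HasFiniteIntegral.of_bounded (C := γ 1) (ae_of_all _ (fun β => ?_))
    simpa using G2_bdd hγmono hγ0 (f := f) hx β
  have hsplit1 : (∫ β in Ioi (-δ), γ (mv f x β))
      = (∫ β in Ioc (-δ) (0:ℝ), γ (mv f x β)) + ∫ β in Ioi (0:ℝ), γ (mv f x β) := by
    have hu : Ioc (-δ) (0:ℝ) ∪ Ioi (0:ℝ) = Ioi (-δ) := Ioc_union_Ioi_eq_Ioi hmδ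
    rw [← hu]
    exact setIntegral_union (Ioc_disjoint_Ioi le_rfl) measurableSet_Ioi iIoc
      (int_Ioi' hγmono hγ0 hx hfb)
  have hsplit2 : (∫ β in Iio (0:ℝ), (γ (mv f x β) - γ x))
      = (∫ β in Iio (-δ), (γ (mv f x β) - γ x)) + ∫ β in Ico (-δ) 0, (γ (mv f x β) - γ x) :=
    integral_Iio_split hmδ (int_Iio' hγmono hγ0 hx hfb)
  -- bound the two correction terms
  have hvol1 : (volume (Ioc (-δ) (0:ℝ))).toReal = δ := by
    rw [Real.volume_Ioc, sub_neg_eq_add, zero_add, ENNReal.toReal_ofReal hδ]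
  have hvol2 : (volume (Ico (-δ) (0:ℝ))).toReal = δ := by
    rw [Real.volume_Ico, sub_neg_eq_add, zero_add, ENNReal.toReal_ofReal hδ]
  have c1 : |∫ β in Ioc (-δ) (0:ℝ), γ (mv f x β)| ≤ γ 1 * δ := by
    have := norm_setIntegral_le_of_norm_le_const_ae' (μ := volume) (s := Ioc (-δ) (0:ℝ))
      (f := fun β => γ (mv f x β)) (C := γ 1)
      (by rw [Real.volume_Ioc]; exact ENNReal.ofReal_lt_top)
      (ae_of_all _ (fun β _ => by rw [Real.norm_eq_abs]; exact G_bdd hγmono hγ0 hx β))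
    rw [measureReal_def, hvol1, Real.norm_eq_abs] at this
    exact this
  have c2 : |∫ β in Ico (-δ) (0:ℝ), (γ (mv f x β) - γ x)| ≤ γ 1 * δ := by
    have := norm_setIntegral_le_of_norm_le_const_ae' (μ := volume) (s := Ico (-δ) (0:ℝ))
      (f := fun β => γ (mv f x β) - γ x) (C := γ 1)
      (by rw [Real.volume_Ico]; exact ENNReal.ofReal_lt_top)
      (ae_of_all _ (fun β _ => by rw [Real.norm_eq_abs]; exact G2_bdd hγmono hγ0 hx β))
    rw [measureReal_def, hvol2, Real.norm_eq_abs] at this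
    exact this
  rw [chq_eq (f := g) hx, chq_eq (f := f) hx]
  have habs1 := (abs_le.1 c1).2
  have habs2 := (abs_le.1 c2).1
  rw [hs1] at h1
  rw [hs2] at h2
  rw [hsplit1] at h1
  linarith [h1, h2, hsplit2, habs1, habs2]

include hγmono hγ0 in
lemma chq_close {f g : ℝ → ℝ} {Rf Rg x δ : ℝ} (hx : x ∈ Icc (0:ℝ) 1) (hδ : 0 ≤ δ)
    (hfb : ∀ ω ∈ Icc (0:ℝ) 1, |f ω| ≤ Rf) (hgb : ∀ ω ∈ Icc (0:ℝ) 1, |g ω| ≤ Rg)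
    (hfg : ∀ ω ∈ Icc (0:ℝ) 1, |f ω - g ω| ≤ δ) :
    |choquet (fun A => γ (volume A).toReal) (Icc 0 x) f
      - choquet (fun A => γ (volume A).toReal) (Icc 0 x) g| ≤ 2 * (γ 1 * δ) := by
  have hup := chq_shift hγmono hγ0 hx hδ hgb hfb
    (fun ω hω => by have := (abs_le.1 (hfg ω hω)).2; linarith)
  have hlow := chq_shift hγmono hγ0 hx hδ hfb hgb
    (fun ω hω => by have := (abs_le.1 (hfg ω hω)).1; linarith)
  rw [abs_le]
  constructor <;> linarith

include hγmono hγcont hγ0 in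
lemma γ_small : ∀ ε > (0:ℝ), ∃ δ > (0:ℝ), ∀ t ∈ Icc (0:ℝ) 1, t < δ → γ t < ε := by
  intro ε hε
  have h := hγcont 0 ⟨le_rfl, zero_le_one⟩
  rw [Metric.continuousWithinAt_iff] at h
  obtain ⟨δ, hδ, hd⟩ := h ε hε
  refine ⟨δ, hδ, fun t ht hlt => ?_⟩
  have := hd ht (by rw [Real.dist_eq, sub_zero, abs_of_nonneg ht.1]; exact hlt)
  rwa [Real.dist_eq, hγ0, sub_zero, abs_of_nonneg (γ_nonneg hγmono hγ0 ht)] at this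

include hγmono hγconc hγ0 in
lemma chq_mod' {f : ℝ → ℝ} {R x x' : ℝ} (hx : x ∈ Icc (0:ℝ) 1) (hx' : x' ∈ Icc (0:ℝ) 1)
    (hR : 0 ≤ R) (hfb : ∀ ω ∈ Icc (0:ℝ) 1, |f ω| ≤ R) :
    |choquet (fun A => γ (volume A).toReal) (Icc 0 x') f
      - choquet (fun A => γ (volume A).toReal) (Icc 0 x) f| ≤ 2 * (γ |x' - x| * R) := by
  rcases le_total x x' with hxx | hxx
  · rw [abs_of_nonneg (sub_nonneg.2 hxx)]
    exact chq_mod hγmono hγconc hγ0 hx hx' hxx hR hfb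
  · rw [abs_of_nonpos (sub_nonpos.2 hxx), neg_sub, abs_sub_comm]
    exact chq_mod hγmono hγconc hγ0 hx' hx hxx hR hfb

include hγmono hγconc hγcont hγ0 in
lemma part1 (f : ℝ → ℝ) (hf : ContinuousOn f (Icc 0 1)) :
    ContinuousOn (fun x => choquet (fun A => γ (volume A).toReal) (Icc 0 x) f)
      (Icc 0 1) := by
  obtain ⟨R, hR⟩ := IsCompact.exists_bound_of_continuousOn isCompact_Icc hf
  have hfb : ∀ ω ∈ Icc (0:ℝ) 1, |f ω| ≤ R := fun ω hω => by
    simpa [Real.norm_eq_abs] using hR ω hω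
  have hR0 : 0 ≤ R := le_trans (abs_nonneg _) (hfb 0 ⟨le_rfl, zero_le_one⟩)
  rw [Metric.continuousOn_iff]
  intro x hx ε hε
  obtain ⟨δ, hδ, hsm⟩ := γ_small hγmono hγcont hγ0 (ε / (2 * R + 1)) (by positivity)
  refine ⟨δ, hδ, fun y hy hdist => ?_⟩
  have hmem : |y - x| ∈ Icc (0:ℝ) 1 := ⟨abs_nonneg _, by
    rw [abs_le]
    constructor <;> [linarith [hy.1, hx.2]; linarith [hy.2, hx.1]]⟩
  have hlt : |y - x| < δ := by rwa [Real.dist_eq] at hdist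
  have hmod := chq_mod' hγmono hγconc hγ0 hx hy hR0 hfb
  have hsmall := hsm _ hmem hlt
  have hγnn : 0 ≤ γ |y - x| := γ_nonneg hγmono hγ0 hmem
  rw [Real.dist_eq]
  calc |choquet (fun A => γ (volume A).toReal) (Icc 0 y) f
        - choquet (fun A => γ (volume A).toReal) (Icc 0 x) f| ≤ 2 * (γ |y - x| * R) :=
        hmod
    _ < ε := small_helper hR0 hε hγnn hsmall

include hγmono hγ0 in
lemma part2 (f : ℝ → ℝ) (hf : ContinuousOn f (Icc 0 1)) :
    ∀ ε > (0:ℝ), ∃ δ > (0:ℝ),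
      ∀ g : ℝ → ℝ, ContinuousOn g (Icc 0 1) →
      (∀ s ∈ Icc (0:ℝ) 1, |f s - g s| < δ) →
      ∀ x ∈ Icc (0:ℝ) 1,
        |choquet (fun A => γ (volume A).toReal) (Icc 0 x) f
          - choquet (fun A => γ (volume A).toReal) (Icc 0 x) g| < ε := by
  intro ε hε
  have hγ1 : 0 ≤ γ 1 := γ_nonneg hγmono hγ0 ⟨zero_le_one, le_rfl⟩
  refine ⟨ε / (2 * γ 1 + 1), by positivity, fun g hg hfg x hx => ?_⟩
  obtain ⟨Rf, hRf⟩ := IsCompact.exists_bound_of_continuousOn isCompact_Icc hf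
  obtain ⟨Rg, hRg⟩ := IsCompact.exists_bound_of_continuousOn isCompact_Icc hg
  have hfb : ∀ ω ∈ Icc (0:ℝ) 1, |f ω| ≤ Rf := fun ω hω => by
    simpa [Real.norm_eq_abs] using hRf ω hω
  have hgb : ∀ ω ∈ Icc (0:ℝ) 1, |g ω| ≤ Rg := fun ω hω => by
    simpa [Real.norm_eq_abs] using hRg ω hω
  set δ := ε / (2 * γ 1 + 1) with hδdef
  have hδ : 0 < δ := by positivity
  have hclose := chq_close hγmono hγ0 hx (le_of_lt hδ) hfb hgb
    (fun ω hω => le_of_lt (hfg ω hω))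
  have h1 : δ * (2 * γ 1 + 1) = ε := div_mul_cancel₀ ε (by positivity)
  calc |choquet (fun A => γ (volume A).toReal) (Icc 0 x) f
        - choquet (fun A => γ (volume A).toReal) (Icc 0 x) g| ≤ 2 * (γ 1 * δ) := hclose
    _ < ε := by nlinarith

include hγmono hγconc hγcont hγ0 in
lemma part3 (R : ℝ) (u : ℕ → ℝ → ℝ)
    (hu : ∀ n, ContinuousOn (u n) (Icc 0 1))
    (hub : ∀ n, ∀ x ∈ Icc (0:ℝ) 1, |u n x| ≤ R) :
    ∃ (h : ℝ → ℝ) (φ : ℕ → ℕ), StrictMono φ ∧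
      TendstoUniformlyOn
        (fun n x => choquet (fun A => γ (volume A).toReal) (Icc 0 x) (u (φ n)))
        h atTop (Icc 0 1) := by
  have hR0 : 0 ≤ R := le_trans (abs_nonneg _) (hub 0 0 ⟨le_rfl, zero_le_one⟩)
  set M : ℝ := 2 * (γ 1 * R) with hM
  set K : Set (↥(Icc (0:ℝ) 1) → ℝ) := {g | (∀ z : ↥(Icc (0:ℝ) 1), |g z| ≤ M) ∧
    ∀ z w : ↥(Icc (0:ℝ) 1), z.1 ≤ w.1 →
      |g w - g z| ≤ 2 * (γ (w.1 - z.1) * R)} with hKdef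
  -- members of K satisfy a symmetric modulus bound
  have hKsym : ∀ g ∈ K, ∀ z w : ↥(Icc (0:ℝ) 1),
      |g w - g z| ≤ 2 * (γ |w.1 - z.1| * R) := by
    intro g hg z w
    rcases le_total z.1 w.1 with hzw | hzw
    · rw [abs_of_nonneg (sub_nonneg.2 hzw)]
      exact hg.2 z w hzw
    · rw [abs_of_nonpos (sub_nonpos.2 hzw), neg_sub, abs_sub_comm]
      exact hg.2 w z hzw
  have habs_mem : ∀ z w : ↥(Icc (0:ℝ) 1), |w.1 - z.1| ∈ Icc (0:ℝ) 1 := by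
    intro z w
    refine ⟨abs_nonneg _, ?_⟩
    rw [abs_le]
    constructor <;> [linarith [w.2.1, z.2.2]; linarith [w.2.2, z.2.1]]
  -- a uniform equicontinuity statement for K
  have hKpre : ∀ ε > (0:ℝ), ∃ δ > (0:ℝ), ∀ z w : ↥(Icc (0:ℝ) 1), dist w z < δ →
      ∀ g ∈ K, dist (g w) (g z) < ε := by
    intro ε hε
    obtain ⟨δ, hδ, hsm⟩ := γ_small hγmono hγcont hγ0 (ε / (2 * R + 1)) (by positivity)
    refine ⟨δ, hδ, fun z w hd g hg => ?_⟩
    have hd' : |w.1 - z.1| < δ := by rwa [Subtype.dist_eq, Real.dist_eq] at hd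
    have hsmall := hsm _ (habs_mem z w) hd'
    have hγnn : 0 ≤ γ |w.1 - z.1| := γ_nonneg hγmono hγ0 (habs_mem z w)
    rw [Real.dist_eq]
    exact lt_of_le_of_lt (hKsym g hg z w) (small_helper hR0 hε hγnn hsmall)
  -- continuity of members of K
  have hKcont : ∀ g ∈ K, Continuous g := by
    intro g hg
    rw [Metric.continuous_iff]
    intro z ε hε
    obtain ⟨δ, hδ, hpre⟩ := hKpre ε hε
    exact ⟨δ, hδ, fun w hw => hpre z w hw g hg⟩
  -- K is closed
  have hKclosed : IsClosed K := by
    have h1 : IsClosed {g : ↥(Icc (0:ℝ) 1) → ℝ | ∀ z : ↥(Icc (0:ℝ) 1), |g z| ≤ M} := by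
      rw [setOf_forall]
      exact isClosed_iInter fun z =>
        isClosed_le ((continuous_apply z).abs) continuous_const
    have h2 : IsClosed {g : ↥(Icc (0:ℝ) 1) → ℝ | ∀ z w : ↥(Icc (0:ℝ) 1), z.1 ≤ w.1 →
        |g w - g z| ≤ 2 * (γ (w.1 - z.1) * R)} := by
      rw [setOf_forall]
      refine isClosed_iInter fun z => ?_
      rw [setOf_forall]
      refine isClosed_iInter fun w => ?_
      rcases le_or_gt z.1 w.1 with hzw | hzw
      · have he : {g : ↥(Icc (0:ℝ) 1) → ℝ | z.1 ≤ w.1 →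
            |g w - g z| ≤ 2 * (γ (w.1 - z.1) * R)}
            = {g | |g w - g z| ≤ 2 * (γ (w.1 - z.1) * R)} := by
          ext g; simp [hzw]
        rw [he]
        exact isClosed_le ((continuous_apply w).sub (continuous_apply z)).abs
          continuous_const
      · have he : {g : ↥(Icc (0:ℝ) 1) → ℝ | z.1 ≤ w.1 →
            |g w - g z| ≤ 2 * (γ (w.1 - z.1) * R)} = univ := by
          ext g; simp [not_le.2 hzw]
        rw [he]
        exact isClosed_univ
    have hKeq : K = {g : ↥(Icc (0:ℝ) 1) → ℝ | ∀ z : ↥(Icc (0:ℝ) 1), |g z| ≤ M} ∩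
        {g | ∀ z w : ↥(Icc (0:ℝ) 1), z.1 ≤ w.1 →
          |g w - g z| ≤ 2 * (γ (w.1 - z.1) * R)} := rfl
    rw [hKeq]
    exact h1.inter h2
  -- K is compact
  have hKcompact : IsCompact K := by
    refine IsCompact.of_isClosed_subset
      (isCompact_univ_pi (fun z : ↥(Icc (0:ℝ) 1) => isCompact_Icc (a := -M) (b := M)))
      hKclosed (fun g hg => ?_)
    rw [mem_univ_pi]
    exact fun z => abs_le.1 (hg.1 z)
  -- the set of continuous maps with graph in K
  set S : Set C(↥(Icc (0:ℝ) 1), ℝ) := {g | ⇑g ∈ K} with hSdef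
  have himg : ContinuousMap.toFun '' S = K := by
    ext g
    constructor
    · rintro ⟨G, hG, rfl⟩
      exact hG
    · intro hg
      exact ⟨⟨g, hKcont g hg⟩, hg, rfl⟩
  have hequi : Equicontinuous ((↑) : S → ↥(Icc (0:ℝ) 1) → ℝ) := by
    intro z
    rw [Metric.equicontinuousAt_iff]
    intro ε hε
    obtain ⟨δ, hδ, hpre⟩ := hKpre ε hε
    refine ⟨δ, hδ, fun w hw i => ?_⟩
    have := hpre z w hw i.1 i.2
    rwa [dist_comm]
  have hScompact : IsCompact S :=
    ArzelaAscoli.isCompact_of_equicontinuous S (himg ▸ hKcompact) hequi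
  -- the sequence of images
  have hWc : ∀ n, Continuous fun z : ↥(Icc (0:ℝ) 1) =>
      choquet (fun A => γ (volume A).toReal) (Icc 0 (z : ℝ)) (u n) :=
    fun n => (part1 hγmono hγconc hγcont hγ0 (u n) (hu n)).restrict
  set W : ℕ → C(↥(Icc (0:ℝ) 1), ℝ) := fun n => ⟨_, hWc n⟩ with hWdef
  have hWS : ∀ n, W n ∈ S := by
    intro n
    constructor
    · intro z
      exact chq_bound hγmono hγ0 z.2 hR0 (hub n)
    · intro z w hzw
      exact chq_mod hγmono hγconc hγ0 z.2 w.2 hzw hR0 (hub n)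
  obtain ⟨h₀, h₀S, φ, hφ, hconv⟩ := hScompact.isSeqCompact hWS
  have huconv : TendstoUniformly (fun n z => (W (φ n)) z) ⇑h₀ atTop :=
    ContinuousMap.tendsto_iff_tendstoUniformly.mp hconv
  classical
  refine ⟨fun x => if hx : x ∈ Icc (0:ℝ) 1 then h₀ ⟨x, hx⟩ else 0, φ, hφ, ?_⟩
  rw [tendstoUniformlyOn_iff_tendstoUniformly_comp_coe]
  have hcomp : ((fun x => if hx : x ∈ Icc (0:ℝ) 1 then h₀ ⟨x, hx⟩ else 0) ∘
      ((↑) : ↥(Icc (0:ℝ) 1) → ℝ)) = ⇑h₀ := by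
    funext z
    simp only [Function.comp_apply, dif_pos z.2]
  rw [hcomp]
  exact huconv

end Gamma

end VolterraChoquetAux

/-- For a distorted Lebesgue measure `μ(A) = γ(m(A))` (`γ` nondecreasing, concave,
continuous, `γ(0)=0`), the Volterra–Choquet operator `V : C[0,1] → C[0,1]`,
`V(f)(x) = (C)∫_{[0,x]} f dμ`, is a compact nonlinear operator: each `V(f)` is
continuous, `V` is continuous for the uniform norm, and the image of every bounded
subset of `C[0,1]` is relatively compact, i.e. every uniformly bounded sequence of
continuous functions has a subsequence whose image under `V` converges uniformly. -/
theorem volterraChoquet_compact_C (γ : ℝ → ℝ)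
    (hγmono : MonotoneOn γ (Icc 0 1)) (hγconc : ConcaveOn ℝ (Icc 0 1) γ)
    (hγcont : ContinuousOn γ (Icc 0 1)) (hγ0 : γ 0 = 0) :
    (∀ f : ℝ → ℝ, ContinuousOn f (Icc 0 1) →
      ContinuousOn (fun x => choquet (fun A => γ (volume A).toReal) (Icc 0 x) f)
        (Icc 0 1)) ∧
    (∀ f : ℝ → ℝ, ContinuousOn f (Icc 0 1) → ∀ ε > (0:ℝ), ∃ δ > (0:ℝ),
      ∀ g : ℝ → ℝ, ContinuousOn g (Icc 0 1) →
      (∀ s ∈ Icc (0:ℝ) 1, |f s - g s| < δ) →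
      ∀ x ∈ Icc (0:ℝ) 1,
        |choquet (fun A => γ (volume A).toReal) (Icc 0 x) f
          - choquet (fun A => γ (volume A).toReal) (Icc 0 x) g| < ε) ∧
    (∀ R : ℝ, ∀ u : ℕ → ℝ → ℝ,
      (∀ n, ContinuousOn (u n) (Icc 0 1)) →
      (∀ n, ∀ x ∈ Icc (0:ℝ) 1, |u n x| ≤ R) →
      ∃ (h : ℝ → ℝ) (φ : ℕ → ℕ), StrictMono φ ∧
        TendstoUniformlyOn
          (fun n x => choquet (fun A => γ (volume A).toReal) (Icc 0 x) (u (φ n)))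
          h atTop (Icc 0 1)) := by
  refine ⟨fun f hf => VolterraChoquetAux.part1 hγmono hγconc hγcont hγ0 f hf,
    fun f hf => VolterraChoquetAux.part2 hγmono hγ0 f hf,
    fun R u hu hub => VolterraChoquetAux.part3 hγmono hγconc hγcont hγ0 R u hu hub⟩
end

section
/- Let μ(A) = γ(m(A)) with γ(x) = 1 − e^{−x} and m the Lebesgue measure on [0,1], and let f₀ ≡ 1. Then the iterates of the Volterra–Choquet operator V(f)(x) = (C)∫_{[0,x]} f dμ satisfy V^n(f₀)(x) = 1 − e^{−x} ∑_{k=0}^{n−1} x^k / k! for all n ≥ 1 and x ∈ [0,1]. -/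
open MeasureTheory Set Filter Topology

/-- The Volterra–Choquet operator with respect to the distorted Lebesgue measure
`μ(A) = 1 − e^{−m(A)}`. -/
noncomputable def volterraChoquet (f : ℝ → ℝ) : ℝ → ℝ :=
  fun x => choquet (fun A => 1 - Real.exp (-(volume A).toReal)) (Icc 0 x) f

namespace VCAux

open scoped NNReal ENNReal

/-- `G n t = 1 - e^{-t} ∑_{k<n} t^k/k!`, the `n`-th iterate. -/
noncomputable def G (n : ℕ) : ℝ → ℝ :=
  fun t => 1 - Real.exp (-t) * ∑ k ∈ Finset.range n, t ^ k / (Nat.factorial k : ℝ)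

lemma G_cont (n : ℕ) : Continuous (G n) := by
  unfold G; fun_prop

lemma G_succ (n : ℕ) :
    G (n + 1) = fun t => G n t - Real.exp (-t) * t ^ n / (Nat.factorial n : ℝ) := by
  funext t
  simp only [G, Finset.sum_range_succ]
  ring

lemma hasDerivAt_G (n : ℕ) (t : ℝ) :
    HasDerivAt (G (n + 1)) (Real.exp (-t) * t ^ n / (Nat.factorial n : ℝ)) t := by
  induction n with
  | zero =>
    have h1 : G 1 = fun t => 1 - Real.exp (-t) := by
      funext t; simp [G]
    rw [h1]
    have hexp : HasDerivAt (fun t : ℝ => Real.exp (-t)) (-Real.exp (-t)) t := by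
      simpa [Function.comp_def] using (Real.hasDerivAt_exp (-t)).comp t (hasDerivAt_neg t)
    have := (hasDerivAt_const t (1:ℝ)).sub hexp
    simpa [Pi.sub_def] using this
  | succ n ih =>
    rw [G_succ (n+1)]
    have hexp : HasDerivAt (fun t : ℝ => Real.exp (-t)) (-Real.exp (-t)) t := by
      simpa [Function.comp_def] using (Real.hasDerivAt_exp (-t)).comp t (hasDerivAt_neg t)
    have hpow : HasDerivAt (fun t : ℝ => t ^ (n+1)) ((n+1 : ℕ) * t ^ n) t :=
      hasDerivAt_pow (n+1) t
    have hprod := (hexp.mul hpow).div_const ((Nat.factorial (n+1) : ℝ))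
    have := ih.sub hprod
    convert this using 1
    · rfl
    · rfl
    · rfl
    have hfac : ((Nat.factorial (n+1) : ℝ)) = (n+1 : ℝ) * (Nat.factorial n : ℝ) := by
      rw [Nat.factorial_succ]; push_cast; ring
    have hne : (Nat.factorial n : ℝ) ≠ 0 := by positivity
    have hne1 : (n+1 : ℝ) ≠ 0 := by positivity
    rw [hfac]
    field_simp
    push_cast
    ring

lemma G_monotone (n : ℕ) {x : ℝ} : MonotoneOn (G n) (Icc 0 x) := by
  cases n with
  | zero =>
    have : G 0 = fun _ => (1:ℝ) := by funext t; simp [G]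
    rw [this]; exact monotoneOn_const
  | succ n =>
    apply monotoneOn_of_deriv_nonneg (convex_Icc 0 x) (G_cont _).continuousOn
      (fun t _ => (hasDerivAt_G n t).differentiableAt.differentiableWithinAt)
    intro t ht
    rw [interior_Icc] at ht
    rw [(hasDerivAt_G n t).deriv]
    have h1 : (0:ℝ) ≤ Real.exp (-t) := (Real.exp_pos _).le
    have h2 : (0:ℝ) ≤ t ^ n := pow_nonneg ht.1.le n
    positivity

lemma G_zero_eval (n : ℕ) : 0 ≤ G n 0 := by
  cases n with
  | zero => simp [G]
  | succ n =>
    have : ∑ k ∈ Finset.range (n+1), (0:ℝ) ^ k / (Nat.factorial k : ℝ) = 1 := by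
      rw [Finset.sum_range_succ']
      simp
    simp [G, this]

lemma G_nonneg (n : ℕ) {t : ℝ} (ht : 0 ≤ t) : 0 ≤ G n t := by
  have := G_monotone n (x := t) ⟨le_refl 0, ht⟩ ⟨ht, le_refl t⟩ ht
  exact le_trans (G_zero_eval n) this

lemma level_eq_Icc {n : ℕ} {x β : ℝ} (hx : 0 ≤ x) (hβx : β ≤ G n x) :
    ∃ s ∈ Icc (0:ℝ) x, {t | β ≤ G n t} ∩ Icc 0 x = Icc s x := by
  set S := {t | β ≤ G n t} ∩ Icc 0 x with hS
  have hxS : x ∈ S := ⟨hβx, hx, le_refl x⟩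
  have hclosed : IsClosed S :=
    (isClosed_le continuous_const (G_cont n)).inter isClosed_Icc
  have hbdd : BddBelow S := ⟨0, fun t ht => ht.2.1⟩
  have hne : S.Nonempty := ⟨x, hxS⟩
  have hsS : sInf S ∈ S := hclosed.csInf_mem hne hbdd
  refine ⟨sInf S, hsS.2, ?_⟩
  ext t
  constructor
  · exact fun ht => ⟨csInf_le hbdd ht, ht.2.2⟩
  · intro ht
    have htx : t ∈ Icc (0:ℝ) x := ⟨le_trans hsS.2.1 ht.1, ht.2⟩
    exact ⟨le_trans hsS.1 (G_monotone n hsS.2 htx ht.1), htx⟩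

/-- The weighted measure `ν = e^{t-x}·m|_{[0,x]}`. -/
noncomputable def ν (x : ℝ) : Measure ℝ :=
  (volume.restrict (Icc 0 x)).withDensity
    (fun t => ENNReal.ofReal (Real.exp (t - x)))

lemma nu_apply {x : ℝ} {B : Set ℝ} (hB : MeasurableSet B) :
    ν x B = ∫⁻ t in B ∩ Icc 0 x, ENNReal.ofReal (Real.exp (t - x)) := by
  rw [ν, withDensity_apply _ hB, Measure.restrict_restrict hB]

lemma nu_Icc {x s : ℝ} (h0 : 0 ≤ s) (hsx : s ≤ x) :
    ν x (Icc s x) = ENNReal.ofReal (1 - Real.exp (s - x)) := by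
  rw [nu_apply measurableSet_Icc]
  have hinter : Icc s x ∩ Icc 0 x = Icc s x := by
    rw [Icc_inter_Icc, max_eq_left h0, min_self]
  rw [hinter]
  have hnn : (0:ℝ → ℝ) ≤ᵐ[volume.restrict (Icc s x)] fun t => Real.exp (t - x) :=
    Eventually.of_forall fun t => (Real.exp_pos _).le
  have hint : IntegrableOn (fun t => Real.exp (t - x)) (Icc s x) :=
    (Real.continuous_exp.comp (continuous_id.sub continuous_const)).integrableOn_Icc
  rw [← ofReal_integral_eq_lintegral_ofReal hint hnn]
  congr 1
  rw [integral_Icc_eq_integral_Ioc, ← intervalIntegral.integral_of_le hsx]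
  have : ∫ t in s..x, Real.exp (t - x) = ∫ t in s - x..x - x, Real.exp t := by
    simpa using (intervalIntegral.integral_comp_sub_right (fun t => Real.exp t) x (a := s) (b := x))
  rw [this, sub_self, integral_exp, Real.exp_zero]

lemma nu_integrable (n : ℕ) {x : ℝ} : Integrable (G n) (ν x) := by
  rw [ν, integrable_withDensity_iff (by fun_prop)
    (Eventually.of_forall fun t => ENNReal.ofReal_lt_top)]
  have : (fun t => G n t * (ENNReal.ofReal (Real.exp (t - x))).toReal)
      = fun t => G n t * Real.exp (t - x) := by
    funext t
    rw [ENNReal.toReal_ofReal (Real.exp_pos _).le]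
  rw [this]
  exact ((G_cont n).mul
    (Real.continuous_exp.comp (continuous_id.sub continuous_const))).integrableOn_Icc

lemma nu_ae_nonneg (n : ℕ) {x : ℝ} : (0:ℝ → ℝ) ≤ᵐ[ν x] G n := by
  rw [EventuallyLE, Filter.eventually_iff, mem_ae_iff]
  have hmeas : MeasurableSet {t : ℝ | (0:ℝ) ≤ G n t}ᶜ := by
    have : MeasurableSet {t : ℝ | (0:ℝ) ≤ G n t} :=
      measurableSet_le measurable_const (G_cont n).measurable
    exact this.compl
  show (ν x) {t : ℝ | (0:ℝ) ≤ G n t}ᶜ = 0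
  rw [nu_apply hmeas]
  have hempty : {t : ℝ | (0:ℝ) ≤ G n t}ᶜ ∩ Icc 0 x = ∅ := by
    ext t
    simp only [mem_inter_iff, mem_compl_iff, mem_setOf_eq, mem_empty_iff_false, iff_false,
      not_and, not_not]
    intro h ht
    exact absurd (G_nonneg n ht.1) h
  rw [hempty]
  simp

lemma first_integral (n : ℕ) {x : ℝ} (hx : 0 ≤ x) :
    ∫ β in Ioi (0:ℝ), (1 - Real.exp (-(volume ({ω | β ≤ G n ω} ∩ Icc 0 x)).toReal)) =
      ∫ t, G n t ∂(ν x) := by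
  rw [(nu_integrable n).integral_eq_integral_meas_le (nu_ae_nonneg n)]
  apply setIntegral_congr_fun measurableSet_Ioi
  intro β hβ
  show 1 - Real.exp (-(volume ({ω | β ≤ G n ω} ∩ Icc 0 x)).toReal)
    = ((ν x) {a | β ≤ G n a}).toReal
  have hmeasB : MeasurableSet {a : ℝ | β ≤ G n a} :=
    measurableSet_le measurable_const (G_cont n).measurable
  have hres : ν x {a : ℝ | β ≤ G n a} = ν x ({a : ℝ | β ≤ G n a} ∩ Icc 0 x) := by
    rw [nu_apply hmeasB, nu_apply (hmeasB.inter measurableSet_Icc), inter_assoc, inter_self]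
  rcases le_or_gt β (G n x) with h | h
  · obtain ⟨s, hs, hS⟩ := level_eq_Icc hx h
    rw [hres, hS, nu_Icc hs.1 hs.2, Real.volume_Icc,
      ENNReal.toReal_ofReal (by linarith [hs.2] : (0:ℝ) ≤ x - s),
      ENNReal.toReal_ofReal
        (by simpa using Real.exp_le_one_iff.mpr (by linarith [hs.2] : s - x ≤ 0))]
    rw [neg_sub]
  · have hempty : {ω : ℝ | β ≤ G n ω} ∩ Icc 0 x = ∅ := by
      apply eq_empty_iff_forall_notMem.mpr
      rintro t ⟨hβt, ht⟩
      exact absurd (le_trans hβt (G_monotone n ht (right_mem_Icc.mpr hx) ht.2)) (not_le.2 h)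
    rw [hres, hempty]
    simp

lemma int_pow_term (k : ℕ) (x : ℝ) :
    ∫ t in (0:ℝ)..x, t ^ k / (Nat.factorial k : ℝ)
      = x ^ (k+1) / (Nat.factorial (k+1) : ℝ) := by
  rw [intervalIntegral.integral_div, integral_pow, Nat.factorial_succ]
  rw [zero_pow (Nat.succ_ne_zero k), div_div]
  push_cast
  ring

lemma int_exp_shift (x : ℝ) : ∫ t in (0:ℝ)..x, Real.exp (t - x) = 1 - Real.exp (-x) := by
  have h : ∫ t in (0:ℝ)..x, Real.exp (t - x) = ∫ t in (0:ℝ) - x..x - x, Real.exp t := by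
    simpa using intervalIntegral.integral_comp_sub_right (fun t => Real.exp t) x
      (a := (0:ℝ)) (b := x)
  rw [h, sub_self, integral_exp, Real.exp_zero, zero_sub]

lemma integral_eval (n : ℕ) (x : ℝ) :
    ∫ t in (0:ℝ)..x, Real.exp (t - x) * G n t = G (n+1) x := by
  have hc1 : Continuous fun t : ℝ => Real.exp (t - x) := by fun_prop
  have hc2 : Continuous fun t : ℝ =>
      Real.exp (-x) * ∑ k ∈ Finset.range n, t ^ k / (Nat.factorial k : ℝ) := by fun_prop
  have hfun : (fun t => Real.exp (t - x) * G n t)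
      = fun t => Real.exp (t - x)
          - Real.exp (-x) * ∑ k ∈ Finset.range n, t ^ k / (Nat.factorial k : ℝ) := by
    funext t
    have hmul : Real.exp (t - x) * Real.exp (-t) = Real.exp (-x) := by
      rw [← Real.exp_add]; ring_nf
    simp only [G]
    linear_combination (-(∑ k ∈ Finset.range n, t ^ k / (Nat.factorial k : ℝ))) * hmul
  rw [hfun, intervalIntegral.integral_sub (hc1.intervalIntegrable _ _)
      (hc2.intervalIntegrable _ _),
    int_exp_shift, intervalIntegral.integral_const_mul,
    intervalIntegral.integral_finset_sum (fun k _ =>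
      ((continuous_pow k).div_const _).intervalIntegrable _ _),
    Finset.sum_congr rfl (fun k _ => int_pow_term k x)]
  simp only [G]
  rw [Finset.sum_range_succ']
  simp only [pow_zero, Nat.factorial_zero, Nat.cast_one]
  ring

lemma integral_nu (n : ℕ) {x : ℝ} (hx : 0 ≤ x) :
    ∫ t, G n t ∂(ν x) = G (n+1) x := by
  have hν : ν x = (volume.restrict (Icc 0 x)).withDensity
      (fun t => ((Real.toNNReal (Real.exp (t - x)) : ℝ≥0) : ℝ≥0∞)) := rfl
  have hmeas : Measurable fun t : ℝ => Real.toNNReal (Real.exp (t - x)) :=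
    (continuous_real_toNNReal.comp
      (Real.continuous_exp.comp (continuous_id.sub continuous_const))).measurable
  rw [hν, integral_withDensity_eq_integral_smul hmeas (G n)]
  have hsmul : (fun t => Real.toNNReal (Real.exp (t - x)) • G n t)
      = fun t => Real.exp (t - x) * G n t := by
    funext t
    rw [NNReal.smul_def, Real.coe_toNNReal _ (Real.exp_pos _).le]; rfl
  rw [hsmul]
  rw [show ∫ t, Real.exp (t - x) * G n t ∂(volume.restrict (Icc 0 x))
      = ∫ t in Icc (0:ℝ) x, Real.exp (t - x) * G n t from rfl,
    integral_Icc_eq_integral_Ioc, ← intervalIntegral.integral_of_le hx]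
  exact integral_eval n x

lemma second_zero (n : ℕ) {x : ℝ} :
    (∫ β in Iio (0:ℝ),
      ((1 - Real.exp (-(volume ({ω | β ≤ G n ω} ∩ Icc 0 x)).toReal))
        - (1 - Real.exp (-(volume (Icc (0:ℝ) x)).toReal)))) = 0 := by
  have h : ∀ β ∈ Iio (0:ℝ), ((1 - Real.exp (-(volume ({ω | β ≤ G n ω} ∩ Icc 0 x)).toReal))
        - (1 - Real.exp (-(volume (Icc (0:ℝ) x)).toReal))) = 0 := by
    intro β hβ
    have : {ω : ℝ | β ≤ G n ω} ∩ Icc 0 x = Icc 0 x := by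
      apply inter_eq_right.mpr
      intro t ht
      exact le_trans (le_of_lt hβ) (G_nonneg n ht.1)
    rw [this, sub_self]
  rw [setIntegral_congr_fun measurableSet_Iio h, integral_zero]

lemma choquet_congr {α : Type*} (μ : Set α → ℝ) (A : Set α) {f g : α → ℝ}
    (h : ∀ a ∈ A, f a = g a) : choquet μ A f = choquet μ A g := by
  have hset : ∀ β : ℝ, {ω | β ≤ f ω} ∩ A = {ω | β ≤ g ω} ∩ A := by
    intro β
    ext a
    simp only [mem_inter_iff, mem_setOf_eq, and_congr_left_iff]
    intro ha
    rw [h a ha]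
  simp only [choquet, hset]

lemma key (n : ℕ) {x : ℝ} (hx : 0 ≤ x) :
    choquet (fun A => 1 - Real.exp (-(volume A).toReal)) (Icc 0 x) (G n) = G (n+1) x := by
  rw [choquet]
  rw [show (∫ β in Iio (0:ℝ),
      ((fun A => 1 - Real.exp (-(volume A).toReal)) ({ω | β ≤ G n ω} ∩ Icc 0 x)
        - (fun A => 1 - Real.exp (-(volume A).toReal)) (Icc (0:ℝ) x)))
      = 0 from second_zero n]
  rw [add_zero]
  rw [show (∫ β in Ioi (0:ℝ),
      (fun A => 1 - Real.exp (-(volume A).toReal)) ({ω | β ≤ G n ω} ∩ Icc 0 x))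
      = ∫ t, G n t ∂(ν x) from first_integral n hx]
  exact integral_nu n hx

lemma iter (n : ℕ) : ∀ x ∈ Icc (0:ℝ) 1,
    volterraChoquet^[n+1] (fun _ => (1:ℝ)) x = G (n+1) x := by
  induction n with
  | zero =>
    intro x hx
    have h0 : (fun _ : ℝ => (1:ℝ)) = G 0 := by funext t; simp [G]
    rw [Function.iterate_one]
    show choquet (fun A => 1 - Real.exp (-(volume A).toReal)) (Icc 0 x) (fun _ => (1:ℝ))
      = G 1 x
    rw [h0]
    exact key 0 hx.1
  | succ n ih =>
    intro x hx
    rw [Function.iterate_succ_apply']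
    show choquet (fun A => 1 - Real.exp (-(volume A).toReal)) (Icc 0 x)
      (volterraChoquet^[n+1] (fun _ => (1:ℝ))) = G (n+2) x
    rw [choquet_congr _ _ (fun a ha => ih a ⟨ha.1, le_trans ha.2 hx.2⟩)]
    exact key (n+1) hx.1

end VCAux

/-- For `μ(A) = 1 − e^{−m(A)}` and `f₀ ≡ 1`, the iterates of the Volterra–Choquet
operator satisfy `V^n(f₀)(x) = 1 − e^{−x} ∑_{k=0}^{n−1} x^k/k!` for all `n ≥ 1`. -/
theorem volterraChoquet_iterates (n : ℕ) (hn : 1 ≤ n) (x : ℝ) (hx : x ∈ Icc (0:ℝ) 1) :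
    (volterraChoquet^[n] (fun _ => 1)) x
      = 1 - Real.exp (-x) * ∑ k ∈ Finset.range n, x ^ k / (Nat.factorial k : ℝ) := by
  obtain ⟨m, rfl⟩ : ∃ m, n = m + 1 := ⟨n - 1, (Nat.succ_pred_eq_of_pos hn).symm⟩
  exact VCAux.iter m x hx
end

section
/- Let μ(A) = γ(m(A)) with γ(x) = 1 − e^{−x} and m Lebesgue measure, and V the corresponding Volterra–Choquet operator on C[0,1]. Then V is cyclic: the linear span of Orb(V, f₀) = {f₀, V(f₀), V²(f₀), ...} with f₀ ≡ 1 is dense in C[0,1] in the uniform norm. -/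
open MeasureTheory Set Filter Topology

lemma integral_exp_neg_0c (c : ℝ) : ∫ u in (0:ℝ)..c, Real.exp (-u) = 1 - Real.exp (-c) := by
  have h : ∀ u ∈ uIcc (0:ℝ) c, HasDerivAt (fun v => -Real.exp (-v)) (Real.exp (-u)) u := by
    intro u _
    simpa using ((hasDerivAt_neg u).exp).fun_neg
  rw [intervalIntegral.integral_eq_sub_of_hasDerivAt h
    ((Real.continuous_exp.comp continuous_neg).intervalIntegrable 0 c)]
  rw [neg_zero, Real.exp_zero]; ring

lemma volterraChoquet_eq_integral {f : ℝ → ℝ} {x : ℝ} (hx : 0 ≤ x)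
    (hmono : MonotoneOn f (Icc 0 x)) (hcont : ContinuousOn f (Icc 0 x))
    (hpos : ∀ t ∈ Icc 0 x, 0 ≤ f t) :
    volterraChoquet f x = ∫ t in (0:ℝ)..x, Real.exp (t - x) * f t := by
  have hxmem : x ∈ Icc (0:ℝ) x := ⟨hx, le_refl x⟩
  set m : ℝ → ℝ := fun β => (volume ({ω | β ≤ f ω} ∩ Icc 0 x)).toReal with hm_def
  have hvol_ne : ∀ β, volume ({ω | β ≤ f ω} ∩ Icc 0 x) ≠ ⊤ := fun β =>
    (lt_of_le_of_lt (measure_mono inter_subset_right) measure_Icc_lt_top).ne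
  have hm_nonneg : ∀ β, 0 ≤ m β := fun β => ENNReal.toReal_nonneg
  have hm_le : ∀ β, m β ≤ x := by
    intro β
    calc m β ≤ (volume (Icc (0:ℝ) x)).toReal :=
          ENNReal.toReal_mono measure_Icc_lt_top.ne (measure_mono inter_subset_right)
      _ = x := by rw [Real.volume_Icc, ENNReal.toReal_ofReal (by linarith), sub_zero]
  have hm_anti : Antitone m := fun a b hab =>
    ENNReal.toReal_mono (hvol_ne a)
      (measure_mono (inter_subset_inter_left _ (fun ω hω => le_trans hab hω)))
  have hm_zero : ∀ β, f x < β → m β = 0 := by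
    intro β hβ
    have : {ω | β ≤ f ω} ∩ Icc 0 x = ∅ := by
      ext ω
      simp only [mem_inter_iff, mem_setOf_eq, mem_empty_iff_false, iff_false, not_and]
      intro hωf hω
      exact absurd hωf (by linarith [hmono hω hxmem hω.2])
    rw [hm_def]; simp [this]
  -- second integral vanishes
  have hI2 : (∫ β in Iio (0:ℝ),
      ((fun A => 1 - Real.exp (-(volume A).toReal)) ({ω | β ≤ f ω} ∩ Icc 0 x)
        - (fun A => 1 - Real.exp (-(volume A).toReal)) (Icc 0 x))) = 0 := by
    rw [setIntegral_congr_fun measurableSet_Iio (g := fun _ => (0:ℝ)) ?_, integral_zero]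
    intro β hβ
    have h : {ω | β ≤ f ω} ∩ Icc 0 x = Icc 0 x := by
      apply inter_eq_self_of_subset_right
      intro ω hω
      exact le_trans (le_of_lt hβ) (hpos ω hω)
    simp [h]
  -- the kernel
  set T : Set (ℝ × ℝ) := {p | p.2 < m p.1} with hT_def
  set K : ℝ × ℝ → ℝ := T.indicator (fun p => Real.exp (-p.2)) with hK_def
  have hm_meas : Measurable m := hm_anti.measurable
  have hT : MeasurableSet T := measurableSet_lt measurable_snd (hm_meas.comp measurable_fst)
  have hK_meas : Measurable K :=
    ((Real.continuous_exp.comp continuous_neg).measurable.comp measurable_snd).indicator hT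
  -- Step A : the integrand of the first integral as an inner integral
  have stepA : ∀ β, 1 - Real.exp (-(m β)) = ∫ u in Ioi (0:ℝ), K (β, u) := by
    intro β
    have hKu : ∀ u, K (β, u) = (Iio (m β)).indicator (fun v => Real.exp (-v)) u := by
      intro u
      by_cases h : u < m β <;>
        simp [hK_def, hT_def, indicator_apply, h, mem_Iio]
    calc 1 - Real.exp (-(m β))
        = ∫ u in (0:ℝ)..(m β), Real.exp (-u) := (integral_exp_neg_0c _).symm
      _ = ∫ u in Ioc (0:ℝ) (m β), Real.exp (-u) := intervalIntegral.integral_of_le (hm_nonneg β)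
      _ = ∫ u in Ioo (0:ℝ) (m β), Real.exp (-u) := integral_Ioc_eq_integral_Ioo
      _ = ∫ u in Ioi (0:ℝ) ∩ Iio (m β), Real.exp (-u) := by rw [Ioi_inter_Iio]
      _ = ∫ u in Ioi (0:ℝ), (Iio (m β)).indicator (fun v => Real.exp (-v)) u :=
          (setIntegral_indicator measurableSet_Iio).symm
      _ = ∫ u in Ioi (0:ℝ), K (β, u) := by
          exact setIntegral_congr_fun measurableSet_Ioi (fun u _ => (hKu u).symm)
  -- Integrability of K on the product
  have hKint : Integrable K ((volume.restrict (Ioi (0:ℝ))).prod (volume.restrict (Ioi (0:ℝ)))) := by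
    have h2 : Integrable (fun u : ℝ => Real.exp (-u)) (volume.restrict (Ioi (0:ℝ))) := by
      have := exp_neg_integrableOn_Ioi 0 (one_pos)
      simpa [IntegrableOn] using this
    have h1 : Integrable ((Iic (f x)).indicator (fun _ => (1:ℝ))) (volume.restrict (Ioi (0:ℝ))) := by
      rw [integrable_indicator_iff measurableSet_Iic]
      refine (integrableOn_const_iff (C := (1:ℝ))).mpr (Or.inr ?_)
      rw [Measure.restrict_apply measurableSet_Iic]
      calc volume (Iic (f x) ∩ Ioi 0) ≤ volume (Ioc 0 (f x)) := by
            apply measure_mono; rintro y ⟨h1, h2⟩; exact ⟨h2, h1⟩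
        _ < ⊤ := measure_Ioc_lt_top
    have hg := Integrable.mul_prod h1 h2
    apply Integrable.mono hg hK_meas.aestronglyMeasurable
    rw [Measure.prod_restrict]
    refine (ae_restrict_iff' (measurableSet_Ioi.prod measurableSet_Ioi)).mpr (ae_of_all _ ?_)
    intro p hp
    by_cases hpT : p ∈ T
    · have hple : p.1 ≤ f x := by
        by_contra hc
        push_neg at hc
        have h0 := hm_zero p.1 hc
        have : p.2 < 0 := by
          have := hpT
          rw [hT_def, mem_setOf_eq, h0] at this
          exact this
        exact absurd hp.2 (by simpa using this.le)
      rw [hK_def, indicator_of_mem hpT]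
      have : (Iic (f x)).indicator (fun _ => (1:ℝ)) p.1 = 1 :=
        indicator_of_mem (mem_Iic.mpr hple) _
      simp [this, abs_of_pos (Real.exp_pos _)]
    · rw [hK_def, indicator_of_notMem hpT]
      simp only [norm_zero]
      positivity
  -- Step C : the inner integral over β
  have hinner : ∀ u ∈ Ioi (0:ℝ), (∫ β in Ioi (0:ℝ), K (β, u))
      = (Iio x).indicator (fun u => Real.exp (-u) * f (x - u)) u := by
    intro u hu
    have hu0 : (0:ℝ) < u := hu
    have hKu : ∀ β, K (β, u) = ({β | u < m β}).indicator (fun _ => Real.exp (-u)) β := by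
      intro β
      by_cases h : u < m β <;> simp [hK_def, hT_def, indicator_apply, h]
    have hmeasS : MeasurableSet {β : ℝ | u < m β} := by
      have hOC : OrdConnected {β : ℝ | u < m β} :=
        ⟨fun a _ b hb z hz => lt_of_lt_of_le hb (hm_anti hz.2)⟩
      exact hOC.measurableSet
    rw [setIntegral_congr_fun measurableSet_Ioi (fun β _ => hKu β),
      setIntegral_indicator hmeasS, setIntegral_const, smul_eq_mul]
    by_cases hux : u < x
    · have hxu0 : (0:ℝ) ≤ x - u := by linarith
      have hxu_mem : x - u ∈ Icc (0:ℝ) x := ⟨hxu0, by linarith⟩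
      have hset_sub : Ioi (0:ℝ) ∩ {β | u < m β} ⊆ Ioc 0 (f (x - u)) := by
        rintro β ⟨hβ0, hβm⟩
        refine ⟨hβ0, ?_⟩
        by_contra hc
        push_neg at hc
        have hsub : {ω | β ≤ f ω} ∩ Icc 0 x ⊆ Icc (x - u) x := by
          rintro ω ⟨hωf, hω⟩
          rw [mem_setOf_eq] at hωf
          refine ⟨?_, hω.2⟩
          by_contra hωc
          push_neg at hωc
          have := hmono hω hxu_mem (le_of_lt hωc)
          linarith
        have hmle : m β ≤ u := by
          calc m β ≤ (volume (Icc (x - u) x)).toReal :=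
                ENNReal.toReal_mono measure_Icc_lt_top.ne (measure_mono hsub)
            _ = u := by rw [Real.volume_Icc, ENNReal.toReal_ofReal (by linarith)]; ring
        exact absurd hβm (by simp only [mem_setOf_eq]; linarith)
      have hset_sup : Ioo (0:ℝ) (f (x - u)) ⊆ Ioi 0 ∩ {β | u < m β} := by
        rintro β ⟨hβ0, hβlt⟩
        refine ⟨hβ0, ?_⟩
        have hcw : ContinuousWithinAt f (Icc 0 x) (x - u) := hcont (x - u) hxu_mem
        have hE : f ⁻¹' (Ioi β) ∈ 𝓝[Icc (0:ℝ) x] (x - u) := hcw (isOpen_Ioi.mem_nhds hβlt)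
        have hnn : 𝓝[Icc (0:ℝ) x] (x - u) = 𝓝 (x - u) :=
          nhdsWithin_eq_nhds.mpr (Icc_mem_nhds (by linarith) (by linarith))
        rw [hnn] at hE
        obtain ⟨δ, hδ0, hδ⟩ := Metric.mem_nhds_iff.mp hE
        set t0 : ℝ := max (x - u - δ/2) ((x - u)/2) with ht0_def
        have ht0lt : t0 < x - u := by
          apply max_lt
          · linarith
          · linarith
        have ht00 : 0 ≤ t0 := le_trans (by linarith) (le_max_right _ _)
        have ht0ball : t0 ∈ Metric.ball (x - u) δ := by
          rw [Real.ball_eq_Ioo]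
          constructor
          · calc x - u - δ < x - u - δ/2 := by linarith
              _ ≤ t0 := le_max_left _ _
          · linarith
        have hft0 : β < f t0 := hδ ht0ball
        have ht0mem : t0 ∈ Icc (0:ℝ) x := ⟨ht00, by linarith⟩
        have hsup2 : Icc t0 x ⊆ {ω | β ≤ f ω} ∩ Icc 0 x := by
          rintro ω ⟨h1, h2⟩
          have hω : ω ∈ Icc (0:ℝ) x := ⟨le_trans ht00 h1, h2⟩
          exact ⟨le_of_lt (lt_of_lt_of_le hft0 (hmono ht0mem hω h1)), hω⟩
        have : x - t0 ≤ m β := by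
          calc x - t0 = (volume (Icc t0 x)).toReal := by
                rw [Real.volume_Icc, ENNReal.toReal_ofReal (by linarith)]
            _ ≤ m β := ENNReal.toReal_mono (hvol_ne β) (measure_mono hsup2)
        simp only [mem_setOf_eq]
        linarith
      have hfxu : 0 ≤ f (x - u) := hpos _ hxu_mem
      have hv : volume (Ioi (0:ℝ) ∩ {β | u < m β}) = ENNReal.ofReal (f (x - u)) := by
        apply le_antisymm
        · refine le_trans (measure_mono hset_sub) ?_
          rw [Real.volume_Ioc, sub_zero]
        · refine le_trans (le_of_eq ?_) (measure_mono hset_sup)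
          rw [Real.volume_Ioo, sub_zero]
      rw [measureReal_def, hv, ENNReal.toReal_ofReal hfxu, indicator_of_mem (mem_Iio.mpr hux)]
      ring
    · have hempty : Ioi (0:ℝ) ∩ {β | u < m β} = ∅ := by
        ext β
        simp only [mem_inter_iff, mem_Ioi, mem_setOf_eq, mem_empty_iff_false, iff_false, not_and]
        intro _
        push_neg at hux
        linarith [hm_le β]
      rw [hempty, indicator_of_notMem (by simpa using hux)]
      simp
  -- assemble
  unfold volterraChoquet choquet
  rw [hI2, add_zero]
  have hfirst : (∫ β in Ioi (0:ℝ),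
      (fun A => 1 - Real.exp (-(volume A).toReal)) ({ω | β ≤ f ω} ∩ Icc 0 x))
      = ∫ β in Ioi (0:ℝ), ∫ u in Ioi (0:ℝ), K (β, u) :=
    setIntegral_congr_fun measurableSet_Ioi (fun β _ => stepA β)
  rw [hfirst]
  have hswap := integral_integral_swap (μ := volume.restrict (Ioi (0:ℝ)))
    (ν := volume.restrict (Ioi (0:ℝ))) (f := fun β u => K (β, u)) (by exact hKint)
  rw [hswap]
  rw [setIntegral_congr_fun measurableSet_Ioi hinner]
  rw [setIntegral_indicator measurableSet_Iio, Ioi_inter_Iio,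
    ← integral_Ioc_eq_integral_Ioo, ← intervalIntegral.integral_of_le hx]
  have hcongr : ∀ u ∈ uIcc (0:ℝ) x, Real.exp (-u) * f (x - u)
      = (fun t => Real.exp (t - x) * f t) (x - u) := by
    intro u _
    simp only
    rw [show x - u - x = -u by ring]
  rw [intervalIntegral.integral_congr hcongr,
    intervalIntegral.integral_comp_sub_left (fun t => Real.exp (t - x) * f t) x]
  rw [sub_self, sub_zero]
noncomputable def Fch (n : ℕ) (t : ℝ) : ℝ :=
  1 - Real.exp (-t) * ∑ k ∈ Finset.range n, t ^ k / (Nat.factorial k : ℝ)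

lemma hasDerivAt_sum_fact (n : ℕ) (t : ℝ) :
    HasDerivAt (fun t : ℝ => ∑ k ∈ Finset.range (n + 1), t ^ k / (Nat.factorial k : ℝ))
      (∑ k ∈ Finset.range n, t ^ k / (Nat.factorial k : ℝ)) t := by
  have heq : (fun t : ℝ => ∑ k ∈ Finset.range (n + 1), t ^ k / (Nat.factorial k : ℝ))
      = fun t : ℝ => (∑ k ∈ Finset.range n, t ^ (k + 1) / (Nat.factorial (k + 1) : ℝ)) + 1 := by
    funext t
    rw [Finset.sum_range_succ' (fun k => t ^ k / (Nat.factorial k : ℝ)) n]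
    simp
  rw [heq]
  have : HasDerivAt (fun t : ℝ => ∑ k ∈ Finset.range n, t ^ (k + 1) / (Nat.factorial (k + 1) : ℝ))
      (∑ k ∈ Finset.range n, t ^ k / (Nat.factorial k : ℝ)) t := by
    apply HasDerivAt.fun_sum
    intro k _
    have h := (hasDerivAt_pow (k + 1) t).div_const (Nat.factorial (k + 1) : ℝ)
    refine h.congr_deriv ?_
    rw [Nat.factorial_succ]
    push_cast [Nat.add_sub_cancel]
    rw [mul_div_mul_left _ _ (by positivity : (k:ℝ) + 1 ≠ 0)]
  simpa using this.add_const 1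

lemma hasDerivAt_Fch (n : ℕ) (t : ℝ) :
    HasDerivAt (Fch (n + 1)) (Real.exp (-t) * (t ^ n / (Nat.factorial n : ℝ))) t := by
  have he : HasDerivAt (fun t : ℝ => Real.exp (-t)) (-Real.exp (-t)) t := by
    simpa using (hasDerivAt_neg t).exp
  have hs := hasDerivAt_sum_fact n t
  have h := (he.mul hs).const_sub 1
  unfold Fch
  refine h.congr_deriv ?_
  rw [Finset.sum_range_succ]
  ring

lemma Fch_mono (n : ℕ) : MonotoneOn (Fch n) (Ici 0) := by
  cases n with
  | zero => intro a _ b _ _; simp [Fch]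
  | succ m =>
    apply monotoneOn_of_deriv_nonneg (convex_Ici 0)
    · exact fun t _ => (hasDerivAt_Fch m t).continuousAt.continuousWithinAt
    · intro t ht
      exact (hasDerivAt_Fch m t).differentiableAt.differentiableWithinAt
    · intro t ht
      rw [interior_Ici] at ht
      rw [(hasDerivAt_Fch m t).deriv]
      have : (0:ℝ) ≤ t := le_of_lt ht
      positivity

lemma Fch_nonneg (n : ℕ) {t : ℝ} (ht : 0 ≤ t) : 0 ≤ Fch n t := by
  have h1 : ∑ k ∈ Finset.range n, t ^ k / (Nat.factorial k : ℝ) ≤ Real.exp t :=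
    Real.sum_le_exp_of_nonneg ht n
  have h2 : Real.exp (-t) * ∑ k ∈ Finset.range n, t ^ k / (Nat.factorial k : ℝ)
      ≤ Real.exp (-t) * Real.exp t := by
    apply mul_le_mul_of_nonneg_left h1 (Real.exp_pos _).le
  rw [← Real.exp_add, neg_add_cancel, Real.exp_zero] at h2
  unfold Fch; linarith

lemma Fch_cont (n : ℕ) : Continuous (Fch n) := by
  unfold Fch; fun_prop

lemma Fch_integral_step (n : ℕ) {x : ℝ} (hx : 0 ≤ x) :
    ∫ t in (0:ℝ)..x, Real.exp (t - x) * Fch n t = Fch (n + 1) x := by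
  have heq : ∀ t : ℝ, Real.exp (t - x) * Fch n t
      = Real.exp t * Real.exp (-x)
        - Real.exp (-x) * ∑ k ∈ Finset.range n, t ^ k / (Nat.factorial k : ℝ) := by
    intro t
    unfold Fch
    have h1 : Real.exp (t - x) = Real.exp t * Real.exp (-x) := by
      rw [sub_eq_add_neg, Real.exp_add]
    have h2 : Real.exp (t - x) * Real.exp (-t) = Real.exp (-x) := by
      rw [← Real.exp_add]; congr 1; ring
    rw [mul_sub, mul_one, ← mul_assoc, h2, h1]
  rw [intervalIntegral.integral_congr (fun t _ => heq t)]
  have hInt1 : IntervalIntegrable (fun t => Real.exp t * Real.exp (-x)) volume 0 x :=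
    (Real.continuous_exp.mul continuous_const).intervalIntegrable 0 x
  have hInt2 : IntervalIntegrable
      (fun t => Real.exp (-x) * ∑ k ∈ Finset.range n, t ^ k / (Nat.factorial k : ℝ)) volume 0 x :=
    (continuous_const.mul (by fun_prop)).intervalIntegrable 0 x
  rw [intervalIntegral.integral_sub hInt1 hInt2]
  rw [intervalIntegral.integral_mul_const, integral_exp]
  rw [intervalIntegral.integral_const_mul]
  rw [intervalIntegral.integral_finset_sum (fun k _ => by
    exact (by fun_prop : Continuous fun t : ℝ => t ^ k / (Nat.factorial k : ℝ)).intervalIntegrable 0 x)]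
  have hsum : ∀ k ∈ Finset.range n,
      (∫ t in (0:ℝ)..x, t ^ k / (Nat.factorial k : ℝ)) = x ^ (k+1) / (Nat.factorial (k+1) : ℝ) := by
    intro k _
    rw [intervalIntegral.integral_div, integral_pow]
    rw [Nat.factorial_succ]
    push_cast
    rw [zero_pow (Nat.succ_ne_zero k)]
    field_simp
    simp
  rw [Finset.sum_congr rfl hsum]
  unfold Fch
  rw [Finset.sum_range_succ' (fun k => x ^ k / (Nat.factorial k : ℝ)) n]
  simp only [pow_zero, Nat.factorial_zero, Nat.cast_one]
  have h1 : Real.exp x * Real.exp (-x) = 1 := by rw [← Real.exp_add]; simp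
  rw [Real.exp_zero]
  linear_combination h1

lemma volterraChoquet_iterate_one {n : ℕ} {x : ℝ} (hx : 0 ≤ x) :
    volterraChoquet^[n] (fun _ => (1:ℝ)) x = Fch n x := by
  induction n generalizing x with
  | zero => simp [Fch]
  | succ n ih =>
    rw [Function.iterate_succ_apply']
    have hEq : EqOn (volterraChoquet^[n] (fun _ => (1:ℝ))) (Fch n) (Icc 0 x) :=
      fun t ht => ih ht.1
    have hmono : MonotoneOn (volterraChoquet^[n] (fun _ => (1:ℝ))) (Icc 0 x) := by
      intro a ha b hb hab
      rw [ih ha.1, ih hb.1]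
      exact Fch_mono n ha.1 hb.1 hab
    have hcont : ContinuousOn (volterraChoquet^[n] (fun _ => (1:ℝ))) (Icc 0 x) :=
      ((Fch_cont n).continuousOn).congr hEq
    have hpos : ∀ t ∈ Icc (0:ℝ) x, 0 ≤ volterraChoquet^[n] (fun _ => (1:ℝ)) t := by
      intro t ht
      rw [ih ht.1]
      exact Fch_nonneg n ht.1
    rw [volterraChoquet_eq_integral hx hmono hcont hpos]
    rw [intervalIntegral.integral_congr (g := fun t => Real.exp (t - x) * Fch n t) ?_]
    · exact Fch_integral_step n hx
    · intro t ht
      rw [uIcc_of_le hx] at ht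
      simp only
      rw [ih ht.1]


/-- Cyclicity of the Volterra–Choquet operator with `μ(A) = 1 − e^{−m(A)}`: the linear
span of the orbit `{f₀, V(f₀), V²(f₀), …}` of `f₀ ≡ 1` is dense in `C[0,1]` for the
uniform norm, i.e. every continuous function on `[0,1]` can be uniformly approximated
by elements of the span of the orbit. -/
theorem volterraChoquet_cyclic :
    ∀ g : ℝ → ℝ, ContinuousOn g (Icc 0 1) → ∀ ε > (0:ℝ),
      ∃ h ∈ Submodule.span ℝ
          (Set.range fun n : ℕ => volterraChoquet^[n] (fun _ => 1)),
        ∀ x ∈ Icc (0:ℝ) 1, |g x - h x| < ε := by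
  intro g hg ε hε
  have hG : ContinuousOn (fun t => Real.exp t * g t) (Icc 0 1) :=
    Real.continuous_exp.continuousOn.mul hg
  obtain ⟨p, hp⟩ := exists_polynomial_near_of_continuousOn 0 1 _ hG ε hε
  set f : ℕ → (ℝ → ℝ) := fun n => volterraChoquet^[n] (fun _ => 1) with hf_def
  set h : ℝ → ℝ := ∑ k ∈ Finset.range (p.natDegree + 1),
      (p.coeff k * (Nat.factorial k : ℝ)) • (f k - f (k + 1)) with hh_def
  refine ⟨h, ?_, ?_⟩
  · apply Submodule.sum_mem
    intro k _
    apply Submodule.smul_mem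
    exact Submodule.sub_mem _ (Submodule.subset_span ⟨k, rfl⟩) (Submodule.subset_span ⟨k + 1, rfl⟩)
  · intro x hx
    have hx0 : (0:ℝ) ≤ x := hx.1
    have hval : h x = Real.exp (-x) * p.eval x := by
      rw [hh_def]
      rw [Finset.sum_apply]
      have hterm : ∀ k ∈ Finset.range (p.natDegree + 1),
          ((p.coeff k * (Nat.factorial k : ℝ)) • (f k - f (k + 1))) x
          = Real.exp (-x) * (p.coeff k * x ^ k) := by
        intro k _
        simp only [Pi.smul_apply, Pi.sub_apply, smul_eq_mul]
        rw [hf_def]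
        simp only
        rw [volterraChoquet_iterate_one hx0, volterraChoquet_iterate_one hx0]
        unfold Fch
        rw [Finset.sum_range_succ]
        have hk : (Nat.factorial k : ℝ) ≠ 0 := by positivity
        field_simp
        ring
      rw [Finset.sum_congr rfl hterm, ← Finset.mul_sum]
      congr 1
      rw [Polynomial.eval_eq_sum_range]
    rw [hval]
    have h1 : Real.exp (-x) * Real.exp x = 1 := by rw [← Real.exp_add]; simp
    have h2 : g x - Real.exp (-x) * p.eval x = Real.exp (-x) * (Real.exp x * g x - p.eval x) := by
      rw [mul_sub, ← mul_assoc, h1, one_mul]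
    rw [h2, abs_mul, abs_of_pos (Real.exp_pos _)]
    have h3 : Real.exp (-x) ≤ 1 := Real.exp_le_one_iff.mpr (by linarith)
    have h4 : |Real.exp x * g x - p.eval x| < ε := by
      rw [abs_sub_comm]
      exact hp x hx
    calc Real.exp (-x) * |Real.exp x * g x - p.eval x|
        ≤ 1 * |Real.exp x * g x - p.eval x| :=
          mul_le_mul_of_nonneg_right h3 (abs_nonneg _)
      _ < ε := by rw [one_mul]; exact h4
end
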